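/- arXiv:2306.04005 — 9 statements merged into one kernel-verified Lean document; each statement's English description precedes it below -/
import Mathlib

section
/- For a tree T on n vertices with distance matrix D and degree vector d, the row vector d^T D equals 2·1^T D − (n−1)·1^T, i.e., for every vertex k, Σ_j d_j d(j,k) = 2 Σ_j d(j,k) − (n−1). -/
open Finset

private lemma tree_adj_dist_ne {V : Type*} {G : SimpleGraph V} (hT : G.IsTree) {u v k : V}
    (huv : G.Adj u v) : G.dist u k ≠ G.dist v k := by
  classical
  intro h
  obtain ⟨p, hp, hpl⟩ := hT.isConnected.exists_path_of_dist v k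
  by_cases hu : u ∈ p.support
  · have h1 := SimpleGraph.dist_le (p.dropUntil u hu)
    have h2 := congrArg SimpleGraph.Walk.length (p.take_spec hu)
    rw [SimpleGraph.Walk.length_append] at h2
    have h3 : (p.takeUntil u hu).length ≠ 0 := fun h0 =>
      huv.ne (SimpleGraph.Walk.eq_of_length_eq_zero h0).symm
    omega
  · have hq : (SimpleGraph.Walk.cons huv p).IsPath := hp.cons hu
    obtain ⟨r, hr, hrl⟩ := hT.isConnected.exists_path_of_dist u k
    have heq := (hT.existsUnique_path u k).unique hq hr
    have hlen : (SimpleGraph.Walk.cons huv p).length = r.length := by rw [heq]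
    rw [SimpleGraph.Walk.length_cons] at hlen
    omega

private lemma tree_parent {V : Type*} {G : SimpleGraph V} (hT : G.IsTree) {j k : V} (hjk : j ≠ k) :
    ∃! i, G.Adj j i ∧ G.dist i k + 1 = G.dist j k := by
  classical
  have hpos : 0 < G.dist j k := hT.isConnected.pos_dist_of_ne hjk
  have huniq : ∀ i, G.Adj j i ∧ G.dist i k + 1 = G.dist j k →
      ∀ i', G.Adj j i' ∧ G.dist i' k + 1 = G.dist j k → i = i' := by
    rintro i ⟨hadj, hd⟩ i' ⟨hadj', hd'⟩
    have key : ∀ a : V, (ha : G.Adj j a) → G.dist a k + 1 = G.dist j k →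
        ∃ w : G.Walk j k, w.IsPath ∧ w.getVert 1 = a := by
      intro a ha hda
      obtain ⟨r, hr, hrl⟩ := hT.isConnected.exists_path_of_dist a k
      have hj : j ∉ r.support := by
        intro hjs
        have h1 := SimpleGraph.dist_le (r.dropUntil j hjs)
        have h2 := congrArg SimpleGraph.Walk.length (r.take_spec hjs)
        rw [SimpleGraph.Walk.length_append] at h2
        have h3 : (r.takeUntil j hjs).length ≠ 0 := fun h0 =>
          ha.ne' (SimpleGraph.Walk.eq_of_length_eq_zero (p := r.takeUntil j hjs) h0)
        omega
      exact ⟨SimpleGraph.Walk.cons ha r, hr.cons hj, by simp⟩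
    obtain ⟨w, hw, hw1⟩ := key i hadj hd
    obtain ⟨w', hw', hw1'⟩ := key i' hadj' hd'
    have := (hT.existsUnique_path j k).unique hw hw'
    rw [← hw1, ← hw1', this]
  obtain ⟨p, hp, hpl⟩ := hT.isConnected.exists_path_of_dist j k
  cases p with
  | nil => rw [SimpleGraph.Walk.length_nil] at hpl; omega
  | @cons _ i _ huv q =>
    have hpar : G.Adj j i ∧ G.dist i k + 1 = G.dist j k := by
      refine ⟨huv, ?_⟩
      have h1 := SimpleGraph.dist_le q
      have h2 : G.dist j k ≤ G.dist i k + 1 := by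
        obtain ⟨r, hrl⟩ := (hT.isConnected i k).exists_walk_length_eq_dist
        simpa [hrl] using SimpleGraph.dist_le (SimpleGraph.Walk.cons huv r)
      rw [SimpleGraph.Walk.length_cons] at hpl
      omega
    exact ⟨i, hpar, fun i' h' => (huniq i hpar i' h').symm⟩

theorem tree_degree_distance_row (n : ℕ) {V : Type*} [Fintype V]
    (G : SimpleGraph V) [DecidableRel G.Adj] (hT : G.IsTree)
    (hn : Fintype.card V = n) :
    ∀ k : V, (∑ j : V, (G.degree j : ℤ) * (G.dist j k : ℤ))
      = 2 * (∑ j : V, (G.dist j k : ℤ)) - ((n : ℤ) - 1) := by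
  intro k
  classical
  set f : V → ℤ := fun j => (G.dist j k : ℤ) with hf
  -- swap lemma for double sums over adjacency
  have swap : ∀ F : V → V → ℤ, (∑ j : V, ∑ i ∈ G.neighborFinset j, F j i)
      = ∑ j : V, ∑ i ∈ G.neighborFinset j, F i j := by
    intro F
    simp_rw [SimpleGraph.neighborFinset_eq_filter, Finset.sum_filter]
    rw [Finset.sum_comm]
    exact Finset.sum_congr rfl fun a _ => Finset.sum_congr rfl fun b _ =>
      if_congr (SimpleGraph.adj_comm G b a) rfl rfl
  -- exactly one direction of the parent relation holds for adjacent vertices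
  have htri : ∀ j i : V, G.Adj j i → G.dist j k ≤ G.dist i k + 1 := by
    intro j i h
    obtain ⟨r, hrl⟩ := (hT.isConnected i k).exists_walk_length_eq_dist
    simpa [hrl] using SimpleGraph.dist_le (SimpleGraph.Walk.cons h r)
  -- Step 1: per-vertex parent count
  have key : ∀ j : V, (∑ i ∈ G.neighborFinset j,
      (if G.dist i k + 1 = G.dist j k then f j else 0)) = f j := by
    intro j
    by_cases hj : j = k
    · subst hj
      simp [hf, SimpleGraph.dist_self]
    · obtain ⟨i0, ⟨hadj0, hd0⟩, huq⟩ := tree_parent hT hj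
      have hfil : (G.neighborFinset j).filter
          (fun i => G.dist i k + 1 = G.dist j k) = {i0} := by
        ext i
        simp only [Finset.mem_filter, SimpleGraph.mem_neighborFinset, Finset.mem_singleton]
        constructor
        · rintro ⟨h1, h2⟩; exact huq i ⟨h1, h2⟩
        · rintro rfl; exact ⟨hadj0, hd0⟩
      rw [← Finset.sum_filter, hfil, Finset.sum_singleton]
  -- degrees
  have hdeg : ∀ j : V, (∑ i ∈ G.neighborFinset j, (1 : ℤ)) = (G.degree j : ℤ) := by
    intro j
    rw [Finset.sum_const, SimpleGraph.card_neighborFinset_eq_degree]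
    simp
  have hdegsum : (∑ j : V, (G.degree j : ℤ)) = 2 * ((n : ℤ) - 1) := by
    have h1 := G.sum_degrees_eq_twice_card_edges
    have h2 := hT.card_edgeFinset
    have h3 : 1 ≤ n := by
      rw [← hn]
      exact Fintype.card_pos_iff.mpr hT.isConnected.nonempty
    rw [hn] at h2
    have : (∑ j : V, (G.degree j : ℤ)) = ((∑ j : V, G.degree j : ℕ) : ℤ) := by push_cast; rfl
    rw [this, h1]
    push_cast
    omega
  -- pointwise pmax identity
  have hpt : ∀ j i : V, G.Adj j i → f j + f i =
      2 * ((if G.dist i k + 1 = G.dist j k then f j else 0)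
        + (if G.dist j k + 1 = G.dist i k then f i else 0)) - 1 := by
    intro j i h
    have hne := tree_adj_dist_ne hT h (k := k)
    have h1 := htri j i h
    have h2 := htri i j h.symm
    by_cases hc : G.dist i k + 1 = G.dist j k
    · have hc' : ¬ (G.dist j k + 1 = G.dist i k) := by omega
      rw [if_pos hc, if_neg hc']
      have : f j = f i + 1 := by simp only [hf]; exact_mod_cast congrArg (Nat.cast : ℕ → ℤ) hc.symm
      omega
    · have hc' : G.dist j k + 1 = G.dist i k := by omega
      rw [if_neg hc, if_pos hc']
      have : f i = f j + 1 := by simp only [hf]; exact_mod_cast congrArg (Nat.cast : ℕ → ℤ) hc'.symm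
      omega
  -- main computation
  have hLHS : (∑ j : V, (G.degree j : ℤ) * f j)
      = ∑ j : V, ∑ i ∈ G.neighborFinset j, f j := by
    refine Finset.sum_congr rfl fun j _ => ?_
    rw [Finset.sum_const, SimpleGraph.card_neighborFinset_eq_degree, nsmul_eq_mul]
  have hdouble : (∑ j : V, ∑ i ∈ G.neighborFinset j, (f j + f i))
      = 2 * (∑ j : V, ∑ i ∈ G.neighborFinset j, f j) := by
    have hsw := swap (fun j _ => f j)
    calc (∑ j : V, ∑ i ∈ G.neighborFinset j, (f j + f i))
        = (∑ j : V, ∑ i ∈ G.neighborFinset j, f j)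
          + (∑ j : V, ∑ i ∈ G.neighborFinset j, f i) := by
          rw [← Finset.sum_add_distrib]
          exact Finset.sum_congr rfl fun j _ => (Finset.sum_add_distrib)
      _ = 2 * (∑ j : V, ∑ i ∈ G.neighborFinset j, f j) := by rw [← hsw]; ring
  have hstep : (∑ j : V, ∑ i ∈ G.neighborFinset j, (f j + f i))
      = 2 * ((∑ j : V, f j) + (∑ j : V, f j)) - (2 * ((n:ℤ) - 1)) := by
    have e1 : (∑ j : V, ∑ i ∈ G.neighborFinset j, (f j + f i))
        = ∑ j : V, ∑ i ∈ G.neighborFinset j,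
          (2 * ((if G.dist i k + 1 = G.dist j k then f j else 0)
            + (if G.dist j k + 1 = G.dist i k then f i else 0)) - 1) := by
      refine Finset.sum_congr rfl fun j _ => Finset.sum_congr rfl fun i hi => ?_
      exact hpt j i (by rwa [← SimpleGraph.mem_neighborFinset])
    rw [e1]
    have e2 : (∑ j : V, ∑ i ∈ G.neighborFinset j,
          (if G.dist j k + 1 = G.dist i k then f i else 0))
        = ∑ j : V, ∑ i ∈ G.neighborFinset j,
          (if G.dist i k + 1 = G.dist j k then f j else 0) :=
      swap (fun j i => if G.dist j k + 1 = G.dist i k then f i else 0)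
    calc (∑ j : V, ∑ i ∈ G.neighborFinset j,
          (2 * ((if G.dist i k + 1 = G.dist j k then f j else 0)
            + (if G.dist j k + 1 = G.dist i k then f i else 0)) - 1))
        = 2 * ((∑ j : V, ∑ i ∈ G.neighborFinset j,
            (if G.dist i k + 1 = G.dist j k then f j else 0))
          + (∑ j : V, ∑ i ∈ G.neighborFinset j,
            (if G.dist j k + 1 = G.dist i k then f i else 0)))
          - ∑ j : V, ∑ i ∈ G.neighborFinset j, (1 : ℤ) := by
          simp only [Finset.sum_sub_distrib, Finset.sum_add_distrib, Finset.mul_sum,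
            mul_add]
      _ = 2 * ((∑ j : V, f j) + (∑ j : V, f j)) - (2 * ((n:ℤ) - 1)) := by
          rw [e2]
          simp only [key, hdeg]
          rw [hdegsum]
  rw [hLHS]
  have := hdouble.symm.trans hstep
  linarith
end

section
/- For a tree T on n vertices with distance matrix D and degree vector d, we have d^T D d = 4·1^T D 1 − 2(n−1)(2n−1). -/
open Finset SimpleGraph

section aux

variable {V : Type*} [Fintype V] [DecidableEq V] (G : SimpleGraph V) [DecidableRel G.Adj]

/-- If `Q` is a shortest walk from `i` to `k` and `dist i k ≤ dist j k` with `j ≠ i`,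
then `j` is not on `Q`. -/
lemma tddq_not_mem_support {k j i : V} (hji : j ≠ i) (Q : G.Walk i k)
    (hQl : Q.length = G.dist i k) (hle : G.dist i k ≤ G.dist j k) : j ∉ Q.support := by
  intro hj
  have h1 : G.dist j k ≤ (Q.dropUntil j hj).length := SimpleGraph.dist_le _
  have h2 : (Q.takeUntil j hj).length + (Q.dropUntil j hj).length = Q.length := by
    rw [← SimpleGraph.Walk.length_append, SimpleGraph.Walk.take_spec]
  have h3 : (Q.takeUntil j hj).length ≠ 0 := fun h0 =>
    hji (SimpleGraph.Walk.eq_of_length_eq_zero h0).symm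
  omega

/-- Adjacent vertices in a tree have different distances to any vertex. -/
lemma tddq_dist_ne (hT : G.IsTree) (k : V) {j i : V} (h : G.Adj j i) :
    G.dist j k ≠ G.dist i k := by
  intro heq
  have hc := hT.isConnected
  obtain ⟨Q, hQp, hQl⟩ := hc.exists_path_of_dist i k
  have hjQ : j ∉ Q.support := tddq_not_mem_support G h.ne Q hQl (le_of_eq heq.symm)
  obtain ⟨P, hPp, hPl⟩ := hc.exists_path_of_dist j k
  have hPQ : P = SimpleGraph.Walk.cons h Q := (hT.existsUnique_path j k).unique hPp (hQp.cons hjQ)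
  have : P.length = Q.length + 1 := by rw [hPQ]; simp
  omega

/-- Every vertex `j ≠ k` in a tree has a unique neighbor closer to `k`. -/
lemma tddq_existsUnique (hT : G.IsTree) {k j : V} (hjk : j ≠ k) :
    ∃! i : V, G.Adj j i ∧ G.dist i k < G.dist j k := by
  have hc := hT.isConnected
  obtain ⟨P, hPp, hPl⟩ := hc.exists_path_of_dist j k
  obtain ⟨i0, h0, q, rfl⟩ := SimpleGraph.Walk.exists_eq_cons_of_ne hjk P
  have hq : G.dist i0 k < G.dist j k := by
    have h1 : G.dist i0 k ≤ q.length := SimpleGraph.dist_le q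
    have h2 : q.length + 1 = G.dist j k := by simpa using hPl
    omega
  refine ⟨i0, ⟨h0, hq⟩, ?_⟩
  rintro i ⟨hadj, hlt⟩
  obtain ⟨Q, hQp, hQl⟩ := hc.exists_path_of_dist i k
  have hjQ : j ∉ Q.support := tddq_not_mem_support G hadj.ne Q hQl (le_of_lt hlt)
  obtain ⟨Q0, hQ0p, hQ0l⟩ := hc.exists_path_of_dist i0 k
  have hjQ0 : j ∉ Q0.support := tddq_not_mem_support G h0.ne Q0 hQ0l (le_of_lt hq)
  have hPQ : SimpleGraph.Walk.cons hadj Q = SimpleGraph.Walk.cons h0 Q0 :=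
    (hT.existsUnique_path j k).unique (hQp.cons hjQ) (hQ0p.cons hjQ0)
  have := congrArg (fun w => SimpleGraph.Walk.getVert w 1) hPQ
  simpa [SimpleGraph.Walk.getVert_cons_succ] using this

/-- The key linear identity: `∑ⱼ deg(j)·d(j,k) = 2∑ⱼ d(j,k) − (n−1)`. -/
lemma tddq_crux (n : ℕ) (hT : G.IsTree) (hn : Fintype.card V = n) (k : V) :
    ∑ j : V, (G.degree j : ℤ) * (G.dist j k : ℤ)
      = 2 * (∑ j : V, (G.dist j k : ℤ)) - ((n : ℤ) - 1) := by
  have hc := hT.isConnected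
  set D : V → ℤ := fun j => (G.dist j k : ℤ) with hD
  have step1 : ∀ j : V, (G.degree j : ℤ) * D j
      = ∑ i : V, (if G.Adj j i then D j else 0) := by
    intro j
    rw [← Finset.sum_filter, ← SimpleGraph.neighborFinset_eq_filter, Finset.sum_const,
      nsmul_eq_mul]
    rfl
  have step2 : ∀ j i : V, (if G.Adj j i then D j else 0)
      = (if G.Adj j i ∧ G.dist i k < G.dist j k then D j else 0)
      + (if G.Adj j i ∧ G.dist j k < G.dist i k then D j else 0) := by
    intro j i
    by_cases h : G.Adj j i
    · by_cases h1 : G.dist i k < G.dist j k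
      · have h2 : ¬ G.dist j k < G.dist i k := by omega
        simp [h, h1, h2]
      · have h2 : G.dist j k < G.dist i k := by
          have := tddq_dist_ne G hT k h; omega
        simp [h, h1, h2]
    · simp [h]
  have hswap : (∑ j : V, ∑ i : V, (if G.Adj j i ∧ G.dist j k < G.dist i k then D j else 0))
      = ∑ j : V, ∑ i : V, (if G.Adj j i ∧ G.dist i k < G.dist j k then D i else 0) := by
    rw [Finset.sum_comm]
    refine Finset.sum_congr rfl fun j _ => Finset.sum_congr rfl fun i _ => ?_
    exact if_congr (and_congr_left' (G.adj_comm i j)) rfl rfl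
  calc ∑ j : V, (G.degree j : ℤ) * D j
      = ∑ j : V, ∑ i : V, ((if G.Adj j i ∧ G.dist i k < G.dist j k then D j else 0)
          + (if G.Adj j i ∧ G.dist j k < G.dist i k then D j else 0)) := by
        refine Finset.sum_congr rfl fun j _ => ?_
        rw [step1 j]
        exact Finset.sum_congr rfl fun i _ => step2 j i
    _ = ∑ j : V, ∑ i : V, (if G.Adj j i ∧ G.dist i k < G.dist j k then D j + D i else 0) := by
        simp only [Finset.sum_add_distrib]
        rw [hswap, ← Finset.sum_add_distrib]
        refine Finset.sum_congr rfl fun j _ => ?_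
        rw [← Finset.sum_add_distrib]
        refine Finset.sum_congr rfl fun i _ => ?_
        by_cases h : G.Adj j i ∧ G.dist i k < G.dist j k <;> simp [h]
    _ = ∑ j : V, ∑ i : V, (if G.Adj j i ∧ G.dist i k < G.dist j k then 2 * D j - 1 else 0) := by
        refine Finset.sum_congr rfl fun j _ => Finset.sum_congr rfl fun i _ => ?_
        by_cases h : G.Adj j i ∧ G.dist i k < G.dist j k
        · simp only [h, if_true]
          have ht : G.dist j k ≤ G.dist j i + G.dist i k := hc.dist_triangle
          have h1 : G.dist j i = 1 := SimpleGraph.dist_eq_one_iff_adj.mpr h.1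
          have h2 : G.dist i k + 1 = G.dist j k := by omega
          simp only [hD]
          push_cast [← h2]
          ring
        · simp [h]
    _ = ∑ j : V, (2 * D j - 1) * ((Finset.univ.filter
          (fun i => G.Adj j i ∧ G.dist i k < G.dist j k)).card : ℤ) := by
        refine Finset.sum_congr rfl fun j _ => ?_
        rw [← Finset.sum_filter, Finset.sum_const]
        simp [mul_comm]
    _ = ∑ j : V, (if j = k then 0 else 2 * D j - 1) := by
        refine Finset.sum_congr rfl fun j _ => ?_
        by_cases hjk : j = k
        · have hempty : (Finset.univ.filter
              (fun i => G.Adj j i ∧ G.dist i k < G.dist j k)) = ∅ := by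
            ext i
            simp only [Finset.mem_filter, Finset.mem_univ, true_and, Finset.notMem_empty,
              iff_false]
            rintro ⟨-, hlt⟩
            rw [hjk] at hlt
            simp [SimpleGraph.dist_self] at hlt
          rw [hempty]
          simp [hjk]
        · obtain ⟨i0, hi0, huniq⟩ := tddq_existsUnique G hT hjk
          have hone : (Finset.univ.filter
              (fun i => G.Adj j i ∧ G.dist i k < G.dist j k)) = {i0} := by
            ext i
            simp only [Finset.mem_filter, Finset.mem_univ, true_and, Finset.mem_singleton]
            exact ⟨fun h => huniq i h, fun h => h ▸ hi0⟩
          simp [hone, hjk]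
    _ = 2 * (∑ j : V, D j) - ((n : ℤ) - 1) := by
        have hpt : ∀ j : V, (if j = k then (0:ℤ) else 2 * D j - 1)
            = (2 * D j - 1) - (if j = k then 2 * D j - 1 else 0) := by
          intro j; by_cases h : j = k <;> simp [h]
        have hDk : D k = 0 := by simp [hD, SimpleGraph.dist_self]
        simp only [hpt]
        rw [Finset.sum_sub_distrib, Finset.sum_ite_eq' Finset.univ k (fun j => 2 * D j - 1),
          Finset.sum_sub_distrib, ← Finset.mul_sum]
        simp [hDk, hn, Finset.card_univ]
        ring

end aux

theorem tree_degree_distance_quadratic (n : ℕ) {V : Type*} [Fintype V]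
    (G : SimpleGraph V) [DecidableRel G.Adj] (hT : G.IsTree)
    (hn : Fintype.card V = n) :
    (∑ j : V, ∑ k : V, (G.degree j : ℤ) * (G.degree k : ℤ) * (G.dist j k : ℤ))
      = 4 * (∑ j : V, ∑ k : V, (G.dist j k : ℤ))
        - 2 * ((n : ℤ) - 1) * (2 * (n : ℤ) - 1) := by
  classical
  have hc := hT.isConnected
  have hne : Nonempty V := hc.nonempty
  have hn1 : 1 ≤ n := by
    rw [← hn]; exact Fintype.card_pos
  have hdegsum : ∑ v : V, (G.degree v : ℤ) = 2 * ((n : ℤ) - 1) := by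
    have h1 : ∑ v : V, G.degree v = 2 * G.edgeFinset.card :=
      G.sum_degrees_eq_twice_card_edges
    have h2 : G.edgeFinset.card = n - 1 := by
      have := hT.card_edgeFinset
      omega
    calc ∑ v : V, (G.degree v : ℤ) = ((∑ v : V, G.degree v : ℕ) : ℤ) := by push_cast; rfl
      _ = ((2 * (n - 1) : ℕ) : ℤ) := by rw [h1, h2]
      _ = 2 * ((n : ℤ) - 1) := by push_cast [Nat.cast_sub hn1]; ring
  have crux := fun k => tddq_crux G n hT hn k
  set T : ℤ := ∑ j : V, ∑ k : V, (G.dist j k : ℤ) with hTT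
  have hmid : ∑ k : V, (G.degree k : ℤ) * (∑ j : V, (G.dist j k : ℤ))
      = 2 * T - (n : ℤ) * ((n : ℤ) - 1) := by
    have hsymm : ∀ k : V, (∑ j : V, (G.dist j k : ℤ)) = ∑ j : V, (G.dist k j : ℤ) := by
      intro k
      exact Finset.sum_congr rfl fun j _ => by rw [SimpleGraph.dist_comm]
    calc ∑ k : V, (G.degree k : ℤ) * (∑ j : V, (G.dist j k : ℤ))
        = ∑ k : V, ∑ j : V, (G.degree k : ℤ) * (G.dist k j : ℤ) := by
          refine Finset.sum_congr rfl fun k _ => ?_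
          rw [hsymm k, Finset.mul_sum]
      _ = ∑ j : V, ∑ k : V, (G.degree k : ℤ) * (G.dist k j : ℤ) := Finset.sum_comm
      _ = ∑ j : V, (2 * (∑ k : V, (G.dist k j : ℤ)) - ((n : ℤ) - 1)) := by
          refine Finset.sum_congr rfl fun j _ => crux j
      _ = 2 * (∑ j : V, ∑ k : V, (G.dist k j : ℤ)) - (n : ℤ) * ((n : ℤ) - 1) := by
          rw [Finset.sum_sub_distrib, Finset.sum_const, ← Finset.mul_sum]
          simp [hn, Finset.card_univ]
      _ = 2 * T - (n : ℤ) * ((n : ℤ) - 1) := by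
          rw [hTT, Finset.sum_comm]
  calc (∑ j : V, ∑ k : V, (G.degree j : ℤ) * (G.degree k : ℤ) * (G.dist j k : ℤ))
      = ∑ k : V, ∑ j : V, (G.degree j : ℤ) * (G.degree k : ℤ) * (G.dist j k : ℤ) :=
        Finset.sum_comm
    _ = ∑ k : V, (G.degree k : ℤ) * (∑ j : V, (G.degree j : ℤ) * (G.dist j k : ℤ)) := by
        refine Finset.sum_congr rfl fun k _ => ?_
        rw [Finset.mul_sum]
        exact Finset.sum_congr rfl fun j _ => by ring
    _ = ∑ k : V, (G.degree k : ℤ) * (2 * (∑ j : V, (G.dist j k : ℤ)) - ((n : ℤ) - 1)) := by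
        refine Finset.sum_congr rfl fun k _ => by rw [crux k]
    _ = ∑ k : V, (2 * ((G.degree k : ℤ) * (∑ j : V, (G.dist j k : ℤ)))
        - ((n : ℤ) - 1) * (G.degree k : ℤ)) :=
        Finset.sum_congr rfl fun k _ => by ring
    _ = 2 * (∑ k : V, (G.degree k : ℤ) * (∑ j : V, (G.dist j k : ℤ)))
        - ((n : ℤ) - 1) * (∑ k : V, (G.degree k : ℤ)) := by
        rw [Finset.sum_sub_distrib, ← Finset.mul_sum, ← Finset.mul_sum]
    _ = 2 * (2 * T - (n : ℤ) * ((n : ℤ) - 1)) - ((n : ℤ) - 1) * (2 * ((n : ℤ) - 1)) := by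
        rw [hmid, hdegsum]
    _ = 4 * T - 2 * ((n : ℤ) - 1) * (2 * (n : ℤ) - 1) := by ring
end

section
/- Let T be a tree on n vertices and a, b, r vertices. Then d(r,a) + d(r,b) − d(a,b) = 2(n−1) if and only if T is a path on n vertices, a = b is one end vertex, and r is the other end vertex. -/
open SimpleGraph

private lemma abs_le_walk_length {V : Type*} {G : SimpleGraph V} (F : V → ℤ)
    (hF : ∀ x y, G.Adj x y → |F x - F y| ≤ 1) :
    ∀ {u v : V} (p : G.Walk u v), |F u - F v| ≤ p.length := by
  intro u v p
  induction p with
  | nil => simp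
  | @cons u w v h q ih =>
    have h1 := hF u w h
    have := abs_sub_le (F u) (F w) (F v)
    simp only [SimpleGraph.Walk.length_cons]
    push_cast
    omega

private lemma mem_edges_index {V : Type*} {G : SimpleGraph V} {u v x y : V}
    (p : G.Walk u v) (h : s(x, y) ∈ p.edges) :
    ∃ k, k + 1 < p.support.length ∧
      ((p.support[k]? = some x ∧ p.support[k+1]? = some y) ∨
       (p.support[k]? = some y ∧ p.support[k+1]? = some x)) := by
  induction p with
  | nil => simp at h
  | @cons u w v h' q ih =>
    rw [SimpleGraph.Walk.edges_cons, List.mem_cons] at h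
    rcases h with h | h
    · refine ⟨0, ?_, ?_⟩
      · simp [SimpleGraph.Walk.support_cons]
      · rw [Sym2.eq_iff] at h
        have hq0 : q.support[0]? = some w := by
          rw [q.support_eq_cons]; simp
        rcases h with ⟨rfl, rfl⟩ | ⟨rfl, rfl⟩
        · left; constructor
          · simp [SimpleGraph.Walk.support_cons]
          · simpa [SimpleGraph.Walk.support_cons] using hq0
        · right; constructor
          · simp [SimpleGraph.Walk.support_cons]
          · simpa [SimpleGraph.Walk.support_cons] using hq0
    · obtain ⟨k, hk, hcase⟩ := ih h
      exact ⟨k + 1, by simpa [SimpleGraph.Walk.support_cons] using Nat.succ_lt_succ hk,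
        by simpa [SimpleGraph.Walk.support_cons] using hcase⟩

/-- `G` is a path graph on all of `V` whose two end vertices are `r` and `a`:
there is a linear ordering of the vertices under which consecutive vertices are
exactly the adjacent ones, with `r` first and `a` last. -/
def IsPathWithEnds {V : Type*} [Fintype V] (G : SimpleGraph V) (r a : V) : Prop :=
  ∃ e : Fin (Fintype.card V) ≃ V,
    ((e.symm r : ℕ) = 0) ∧ ((e.symm a : ℕ) = Fintype.card V - 1) ∧
    ∀ i j : Fin (Fintype.card V), G.Adj (e i) (e j) ↔ ((i : ℕ) + 1 = j ∨ (j : ℕ) + 1 = i)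

theorem dist_sum_eq_max_iff (n : ℕ) {V : Type*} [Fintype V]
    (G : SimpleGraph V) (hT : G.IsTree) (hn : Fintype.card V = n)
    (a b r : V) :
    (G.dist r a : ℤ) + (G.dist r b : ℤ) - (G.dist a b : ℤ) = 2 * ((n : ℤ) - 1) ↔
      (a = b ∧ IsPathWithEnds G r a) := by
  subst hn
  classical
  set N := Fintype.card V with hN
  have hconn := hT.isConnected
  haveI : Nonempty V := ⟨a⟩
  have hpos : 0 < N := Fintype.card_pos
  constructor
  · intro h
    obtain ⟨p, hp, hpl⟩ := hconn.exists_path_of_dist r a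
    obtain ⟨p', hp', hpl'⟩ := hconn.exists_path_of_dist r b
    have h1 : G.dist r a < N := hpl ▸ hp.length_lt
    have h2 : G.dist r b < N := hpl' ▸ hp'.length_lt
    have hra : G.dist r a = N - 1 := by omega
    have hab : G.dist a b = 0 := by omega
    have hab' : a = b := hconn.dist_eq_zero_iff.mp hab
    refine ⟨hab', ?_⟩
    -- build the equivalence from the support of p
    have hplen : p.length = N - 1 := hpl.trans hra
    have hlen : p.support.length = N := by
      rw [SimpleGraph.Walk.length_support, hplen]; omega
    have nd : p.support.Nodup := hp.support_nodup
    set L := p.support with hL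
    have finj : Function.Injective (fun i : Fin N => L.get (Fin.cast hlen.symm i)) := by
      intro i j hij
      have := nd.get_inj_iff.mp hij
      exact Fin.cast_injective _ this
    have fbij : Function.Bijective (fun i : Fin N => L.get (Fin.cast hlen.symm i)) :=
      (Fintype.bijective_iff_injective_and_card _).mpr ⟨finj, by simp [hN]⟩
    set e : Fin N ≃ V := Equiv.ofBijective _ fbij with he
    have happ : ∀ i : Fin N, e i = L.get (Fin.cast hlen.symm i) := fun i => rfl
    have he0 : e ⟨0, hpos⟩ = r := by
      rw [happ]
      have : L = r :: p.support.tail := p.support_eq_cons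
      simp [this]
    have heN : e ⟨N - 1, by omega⟩ = a := by
      rw [happ]
      have h1 : L.get (Fin.cast hlen.symm ⟨N - 1, by omega⟩) =
          L.getLast (by rw [hL]; exact p.support_ne_nil) := by
        rw [List.getLast_eq_getElem]
        simp [hlen]
      rw [h1]; exact p.getLast_support
    -- edge set equality
    have hend : p.edges.Nodup := hp.isTrail.edges_nodup
    have hecard : p.edges.toFinset.card = N - 1 := by
      rw [List.toFinset_card_of_nodup hend, SimpleGraph.Walk.length_edges, hplen]
    have hsub : p.edges.toFinset ⊆ G.edgeFinset := by
      intro x hx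
      rw [List.mem_toFinset] at hx
      exact SimpleGraph.mem_edgeFinset.mpr (p.edges_subset_edgeSet hx)
    have hGcard : G.edgeFinset.card + 1 = N := hT.card_edgeFinset
    have hEq : p.edges.toFinset = G.edgeFinset :=
      Finset.eq_of_subset_of_card_le hsub (by omega)
    -- key: index recovery
    have key : ∀ (m : ℕ) (hm : m < N) (i : Fin N), L[m]? = some (e i) → m = (i : ℕ) := by
      intro m hm i hmi
      rw [List.getElem?_eq_getElem (by omega)] at hmi
      have : L.get ⟨m, by omega⟩ = L.get (Fin.cast hlen.symm i) := by
        simpa [happ, List.get_eq_getElem] using congrArg (fun o => o.getD (e i)) hmi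
      have := nd.get_inj_iff.mp this
      simpa using congrArg Fin.val this
    refine ⟨e, ?_, ?_, ?_⟩
    · rw [← he0, Equiv.symm_apply_apply]
    · rw [← heN, Equiv.symm_apply_apply]
    · intro i j
      constructor
      · intro hadj
        have hmem : s(e i, e j) ∈ p.edges := by
          have : s(e i, e j) ∈ G.edgeFinset := SimpleGraph.mem_edgeFinset.mpr hadj
          rw [← hEq, List.mem_toFinset] at this
          exact this
        obtain ⟨k, hk, hcase⟩ := mem_edges_index p hmem
        rw [hlen] at hk
        rcases hcase with ⟨hx, hy⟩ | ⟨hx, hy⟩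
        · have := key k (by omega) i hx
          have := key (k+1) (by omega) j hy
          omega
        · have := key k (by omega) j hx
          have := key (k+1) (by omega) i hy
          omega
      · have chain := List.isChain_iff_getElem.mp (p.isChain_adj_support)
        rw [← hL] at chain
        rintro (hij | hji)
        · have hadj' := chain (i : ℕ) (by have := j.isLt; rw [hlen]; omega)
          have hj' : (Fin.cast hlen.symm j) =
              (⟨(i : ℕ) + 1, by have := j.isLt; rw [hlen]; omega⟩ : Fin L.length) := by
            apply Fin.ext; simpa using hij.symm
          rw [happ, happ, hj']
          exact hadj'
        · have hadj' := chain (j : ℕ) (by have := i.isLt; rw [hlen]; omega)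
          have hi' : (Fin.cast hlen.symm i) =
              (⟨(j : ℕ) + 1, by have := i.isLt; rw [hlen]; omega⟩ : Fin L.length) := by
            apply Fin.ext; simpa using hji.symm
          rw [happ, happ, hi']
          exact G.adj_symm hadj'
  · rintro ⟨rfl, e, h0, hEnd, hadj⟩
    -- dist a a = 0
    have hda : G.dist a a = 0 := SimpleGraph.dist_self
    -- upper bound
    obtain ⟨p, hp, hpl⟩ := hconn.exists_path_of_dist r a
    have hub : G.dist r a < N := hpl ▸ hp.length_lt
    -- lower bound
    set F : V → ℤ := fun x => ((e.symm x : ℕ) : ℤ) with hF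
    have hF1 : ∀ x y, G.Adj x y → |F x - F y| ≤ 1 := by
      intro x y hxy
      have hx : e (e.symm x) = x := e.apply_symm_apply x
      have hy : e (e.symm y) = y := e.apply_symm_apply y
      have : G.Adj (e (e.symm x)) (e (e.symm y)) := by rw [hx, hy]; exact hxy
      have := (hadj _ _).mp this
      simp only [hF]
      rcases this with h | h <;> rw [abs_le] <;> omega
    have hlb := abs_le_walk_length F hF1 p
    rw [hpl] at hlb
    have hFr : F r = 0 := by simp [hF, h0]
    have hFa : F a = ((N - 1 : ℕ) : ℤ) := by simp [hF, hEnd, hN]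
    rw [hFr, hFa] at hlb
    have hlb' : ((N - 1 : ℕ) : ℤ) ≤ G.dist r a := by
      rwa [zero_sub, abs_neg, abs_of_nonneg (by positivity)] at hlb
    have : G.dist r a = N - 1 := by omega
    rw [this, hda]
    push_cast
    omega
end

section
/- Let T be a tree on n vertices and fix vertices r and a. The sum 2 Σ_{b ∈ V(T)} d(r, P_{a,b}) equals n(n−1) if and only if T is a path on n vertices with r and a as its two end vertices. -/
/-- The distance from vertex `r` to the (unique, in a tree) path between `a` and `b`. -/
noncomputable def distToPath {V : Type*} (G : SimpleGraph V) (r a b : V) : ℕ :=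
  sInf (G.dist r '' {s | G.dist a s + G.dist s b = G.dist a b})

open SimpleGraph Finset

section aux
variable {V : Type*} {G : SimpleGraph V}

lemma distToPath_le (r a b s : V)
    (hs : G.dist a s + G.dist s b = G.dist a b) :
    distToPath G r a b ≤ G.dist r s :=
  Nat.sInf_le ⟨s, hs, rfl⟩

lemma distToPath_le_dist_right (r a b : V) :
    distToPath G r a b ≤ G.dist r b :=
  distToPath_le r a b b (by simp)

lemma distToPath_le_dist_left (r a b : V) :
    distToPath G r a b ≤ G.dist r a :=
  distToPath_le r a b a (by simp)

lemma my_dist_lt_card [Fintype V] (hc : G.Connected) (u v : V) :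
    G.dist u v < Fintype.card V := by
  obtain ⟨p, hp, hl⟩ := hc.exists_path_of_dist u v
  rw [← hl]; exact hp.length_lt

lemma adj_dist_le_one (hc : G.Connected) {u v : V} (h : G.Adj u v) :
    G.dist u v ≤ 1 := le_of_eq (dist_eq_one_iff_adj.mpr h)

/-- walk prefix lemma -/
lemma exists_mid_of_walk (hc : G.Connected) :
    ∀ {x u : V} (p : G.Walk x u) (k : ℕ), k ≤ p.length →
      ∃ (v : V) (w : G.Walk v u), w.length + k ≤ p.length ∧ G.dist x v ≤ k := by
  intro x u p
  induction p with
  | nil =>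
    intro k hk
    exact ⟨_, .nil, by simpa using hk, by simp [SimpleGraph.dist_self]⟩
  | @cons x y u h q ih =>
    intro k hk
    cases k with
    | zero => exact ⟨x, .cons h q, by simp, by simp⟩
    | succ k' =>
      simp only [Walk.length_cons] at hk
      obtain ⟨v, w, hw, hd⟩ := ih k' (by omega)
      refine ⟨v, w, by simp [Walk.length_cons]; omega, ?_⟩
      calc G.dist x v ≤ G.dist x y + G.dist y v := hc.dist_triangle
        _ ≤ 1 + k' := Nat.add_le_add (adj_dist_le_one hc h) hd
        _ = k' + 1 := by omega

lemma exists_vertex_dist_eq (hc : G.Connected) (r b : V) {k : ℕ} (hk : k ≤ G.dist r b) :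
    ∃ v, G.dist r v = k := by
  obtain ⟨p, hp⟩ := hc.exists_walk_length_eq_dist r b
  obtain ⟨v, w, hw, hd⟩ := exists_mid_of_walk hc p k (by omega)
  have h1 : G.dist r b ≤ G.dist r v + w.length :=
    le_trans (hc.dist_triangle) (Nat.add_le_add_left (dist_le w) _)
  exact ⟨v, by omega⟩

lemma exists_adj_pred (hc : G.Connected) (r u : V) {k : ℕ} (hk : G.dist r u = k + 1) :
    ∃ v, G.dist r v = k ∧ G.Adj v u := by
  obtain ⟨p, hp⟩ := hc.exists_walk_length_eq_dist r u
  obtain ⟨v, w, hw, hd⟩ := exists_mid_of_walk hc p k (by omega)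
  have h1 : G.dist r u ≤ G.dist r v + w.length :=
    le_trans (hc.dist_triangle) (Nat.add_le_add_left (dist_le w) _)
  have hdl : G.dist r v = k := by omega
  have hwl : w.length = 1 := by omega
  have hadj : G.Adj (w.getVert 0) (w.getVert 1) := w.adj_getVert_succ (by omega)
  rw [Walk.getVert_zero] at hadj
  have : w.getVert 1 = u := by rw [← hwl, Walk.getVert_length]
  rw [this] at hadj
  exact ⟨v, hdl, hadj⟩

end aux

section key
variable {V : Type*} {G : SimpleGraph V}

lemma key_count [Fintype V] (hc : G.Connected) (r : V) :
    2 * ∑ b : V, G.dist r b ≤ Fintype.card V * (Fintype.card V - 1) ∧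
    (2 * ∑ b : V, G.dist r b = Fintype.card V * (Fintype.card V - 1) →
      ∃ e : Fin (Fintype.card V) ≃ V, ∀ b, G.dist r b = ((e.symm b : Fin (Fintype.card V)) : ℕ)) := by
  classical
  have : Nonempty V := hc.nonempty
  set n := Fintype.card V with hn
  have hn1 : 1 ≤ n := Fintype.card_pos
  set N := n - 1 with hN
  have hub : ∀ b : V, G.dist r b ≤ N := fun b => by
    have := my_dist_lt_card hc r b; omega
  set c : ℕ → ℕ := fun k => (univ.filter (fun b : V => k < G.dist r b)).card with hcdef
  -- layered sum
  have hsum : ∑ b : V, G.dist r b = ∑ k ∈ range N, c k := by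
    have h1 : ∀ b : V, G.dist r b = ∑ k ∈ range N, (if k < G.dist r b then 1 else 0) := by
      intro b
      rw [← Finset.card_filter]
      have : (range N).filter (fun k => k < G.dist r b) = range (G.dist r b) := by
        ext k
        simp only [mem_filter, mem_range]
        have := hub b; omega
      rw [this, card_range]
    calc ∑ b : V, G.dist r b
        = ∑ b : V, ∑ k ∈ range N, (if k < G.dist r b then 1 else 0) :=
          Finset.sum_congr rfl fun b _ => h1 b
      _ = ∑ k ∈ range N, ∑ b : V, (if k < G.dist r b then 1 else 0) := Finset.sum_comm
      _ = ∑ k ∈ range N, c k := Finset.sum_congr rfl fun k _ => (Finset.card_filter _ _).symm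
  -- termwise bound
  have hck : ∀ k ∈ range N, c k ≤ N - k := by
    intro k hk
    simp only [mem_range] at hk
    rcases Nat.eq_zero_or_pos (c k) with h0 | hpos
    · omega
    · obtain ⟨b, hb⟩ := Finset.card_pos.mp hpos
      simp only [mem_filter, mem_univ, true_and] at hb
      have hexk : ∀ j : ℕ, ∃ v, j ≤ k → G.dist r v = j := by
        intro j
        by_cases hj : j ≤ k
        · obtain ⟨v, hv⟩ := exists_vertex_dist_eq hc r b (show j ≤ G.dist r b by omega)
          exact ⟨v, fun _ => hv⟩
        · exact ⟨r, fun h => absurd h hj⟩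
      choose g hg using hexk
      have hcard : k + 1 ≤ (univ.filter (fun b : V => ¬ k < G.dist r b)).card := by
        have h := Finset.card_le_card_of_injOn (f := g)
          (s := range (k+1)) (t := univ.filter (fun b : V => ¬ k < G.dist r b))
          (fun j hj => by
            simp only [mem_coe, mem_range] at hj
            simp only [mem_coe, mem_filter, mem_univ, true_and]
            have := hg j (by omega); omega)
          (fun j1 h1 j2 h2 hgj => by
            simp only [coe_range, Set.mem_Iio] at h1 h2
            have e1 := hg j1 (by omega)
            have e2 := hg j2 (by omega)
            rw [hgj] at e1; omega)
        simpa using h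
      have hpart := Finset.card_filter_add_card_filter_not
        (s := (univ : Finset V)) (p := fun b : V => k < G.dist r b)
      rw [Finset.card_univ] at hpart
      have hckdef : c k = (univ.filter (fun b : V => k < G.dist r b)).card := rfl
      omega
  -- the target sum value
  have h1 : ∑ k ∈ range N, (N - k) = ∑ k ∈ range N, (k + 1) := by
    rw [← Finset.sum_range_reflect (fun k => N - k) N]
    exact Finset.sum_congr rfl fun j hj => by simp only [mem_range] at hj; omega
  have h2 : ∑ k ∈ range N, (k + 1) = ∑ k ∈ range (N + 1), k := by
    rw [Finset.sum_range_succ' (fun k => k) N]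
    simp
  have h3 : 2 * ∑ k ∈ range N, (N - k) = n * (n - 1) := by
    rw [h1, h2, Nat.mul_comm]
    rw [Finset.sum_range_id_mul_two (N + 1)]
    have hNn : N + 1 = n := by omega
    rw [hNn]
  have hle : 2 * ∑ b : V, G.dist r b ≤ n * (n - 1) := by
    rw [hsum, ← h3]
    exact Nat.mul_le_mul_left 2 (Finset.sum_le_sum hck)
  refine ⟨hle, fun heq => ?_⟩
  -- equality analysis
  have hsums : ∑ k ∈ range N, c k = ∑ k ∈ range N, (N - k) := by
    rw [hsum, ← h3] at heq; omega
  have hterm : ∀ k ∈ range N, c k = N - k :=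
    (Finset.sum_eq_sum_iff_of_le hck).mp hsums
  have hall : ∀ i : ℕ, i < n → ∃ v, G.dist r v = i := by
    intro i hi
    rcases Nat.eq_zero_or_pos N with h0 | hNpos
    · refine ⟨r, ?_⟩
      have : i = 0 := by omega
      simp [this, SimpleGraph.dist_self]
    · have hc1 : c (N - 1) = 1 := by
        have := hterm (N - 1) (by simp only [mem_range]; omega)
        omega
      obtain ⟨b, hb⟩ := Finset.card_pos.mp (show 0 < c (N-1) by omega)
      simp only [mem_filter, mem_univ, true_and] at hb
      exact exists_vertex_dist_eq hc r b (by have := hub b; omega)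
  have hex : ∀ i : ℕ, ∃ v, i < n → G.dist r v = i := by
    intro i
    by_cases hi : i < n
    · obtain ⟨v, hv⟩ := hall i hi
      exact ⟨v, fun _ => hv⟩
    · exact ⟨r, fun h => absurd h hi⟩
  choose g hg using hex
  have hinj : Function.Injective (fun i : Fin n => g i) := by
    intro i j hij
    have e1 := hg i i.isLt
    have e2 := hg j j.isLt
    simp only at hij
    rw [hij] at e1
    exact Fin.ext (by omega)
  have hbij : Function.Bijective (fun i : Fin n => g i) :=
    (Fintype.bijective_iff_injective_and_card _).mpr ⟨hinj, by simp [hn]⟩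
  refine ⟨Equiv.ofBijective _ hbij, fun b => ?_⟩
  set e := Equiv.ofBijective _ hbij with he
  have hb : g (e.symm b : Fin n) = b := e.apply_symm_apply b
  have hfin := hg ((e.symm b : Fin n) : ℕ) (e.symm b).isLt
  rw [hb] at hfin
  exact hfin

end key

section path
variable {V : Type*} [Fintype V] {G : SimpleGraph V} (e : Fin (Fintype.card V) ≃ V)
  (hadj : ∀ i j : Fin (Fintype.card V), G.Adj (e i) (e j) ↔ ((i : ℕ) + 1 = j ∨ (j : ℕ) + 1 = i))

include hadj

lemma path_walk_exists : ∀ d : ℕ, ∀ i j : Fin (Fintype.card V), (i : ℕ) + d = (j : ℕ) →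
    ∃ w : G.Walk (e i) (e j), w.length = d := by
  intro d
  induction d with
  | zero =>
    intro i j hij
    have : i = j := Fin.ext (by omega)
    subst this
    exact ⟨.nil, rfl⟩
  | succ d ih =>
    intro i j hij
    have hj1 : (j : ℕ) - 1 < Fintype.card V := by omega
    set j' : Fin (Fintype.card V) := ⟨(j : ℕ) - 1, hj1⟩ with hj'
    obtain ⟨w, hw⟩ := ih i j' (by simp [hj']; omega)
    have ha : G.Adj (e j') (e j) := (hadj j' j).mpr (Or.inl (by simp [hj']; omega))
    exact ⟨w.concat ha, by rw [Walk.length_concat, hw]⟩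

lemma path_walk_length_ge : ∀ {x y : V} (w : G.Walk x y),
    ((e.symm x : ℕ) : ℤ) - ((e.symm y : ℕ) : ℤ) ≤ w.length ∧
    ((e.symm y : ℕ) : ℤ) - ((e.symm x : ℕ) : ℤ) ≤ w.length := by
  intro x y w
  induction w with
  | nil => simp
  | @cons x z y h q ih =>
    have hx : G.Adj (e (e.symm x)) (e (e.symm z)) := by
      rwa [e.apply_symm_apply, e.apply_symm_apply]
    have hd := (hadj _ _).mp hx
    rw [Walk.length_cons]
    push_cast
    obtain ⟨ih1, ih2⟩ := ih
    omega

lemma path_dist_le' : ∀ i j : Fin (Fintype.card V), (i : ℕ) ≤ (j : ℕ) →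
    G.dist (e i) (e j) = (j : ℕ) - (i : ℕ) := by
  intro i j hij
  obtain ⟨w, hw⟩ := path_walk_exists e hadj ((j : ℕ) - (i : ℕ)) i j (by omega)
  apply le_antisymm
  · rw [← hw]; exact dist_le w
  · obtain ⟨p, hp⟩ := (w.reachable).exists_walk_length_eq_dist
    have := (path_walk_length_ge e hadj p).2
    rw [hp] at this
    simp only [Equiv.symm_apply_apply] at this
    omega

lemma path_dist (i j : Fin (Fintype.card V)) :
    G.dist (e i) (e j) = max (i : ℕ) (j : ℕ) - min (i : ℕ) (j : ℕ) := by
  rcases le_total (i : ℕ) (j : ℕ) with h | h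
  · rw [path_dist_le' e hadj i j h]; omega
  · rw [SimpleGraph.dist_comm, path_dist_le' e hadj j i h]; omega

end path

theorem sum_dist_to_paths_eq_max_iff (n : ℕ) {V : Type*} [Fintype V]
    (G : SimpleGraph V) (hT : G.IsTree) (hn : Fintype.card V = n)
    (r a : V) :
    2 * ∑ b : V, distToPath G r a b = n * (n - 1) ↔ IsPathWithEnds G r a := by
  subst hn
  classical
  have hc := hT.isConnected
  have : Nonempty V := hc.nonempty
  set n := Fintype.card V with hn
  have hn1 : 1 ≤ n := Fintype.card_pos
  constructor
  · intro h
    have hle : ∀ b : V, distToPath G r a b ≤ G.dist r b :=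
      fun b => distToPath_le_dist_right r a b
    obtain ⟨hKle, hKeq⟩ := key_count hc r
    rw [← hn] at hKle
    have hsum_le : ∑ b : V, distToPath G r a b ≤ ∑ b : V, G.dist r b :=
      Finset.sum_le_sum (fun b _ => hle b)
    have hdist_eq : 2 * ∑ b : V, G.dist r b = n * (n - 1) := by omega
    have hterm : ∀ b : V, distToPath G r a b = G.dist r b := by
      have hss : ∑ b : V, distToPath G r a b = ∑ b : V, G.dist r b := by omega
      have := (Finset.sum_eq_sum_iff_of_le (fun b _ => hle b)).mp hss
      exact fun b => this b (mem_univ b)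
    obtain ⟨e, he⟩ := hKeq hdist_eq
    refine ⟨e, ?_, ?_, ?_⟩
    · have := he r; rw [SimpleGraph.dist_self] at this; omega
    · set b' := e ⟨n - 1, by omega⟩ with hb'
      have hdb' : G.dist r b' = n - 1 := by
        have := he b'
        rw [hb', Equiv.symm_apply_apply] at this
        exact this
      have h1 : (n - 1 : ℕ) ≤ G.dist r a := by
        calc (n - 1 : ℕ) = G.dist r b' := hdb'.symm
          _ = distToPath G r a b' := (hterm b').symm
          _ ≤ G.dist r a := distToPath_le_dist_left r a b'
      have h2 : G.dist r a < n := my_dist_lt_card hc r a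
      have := he a; omega
    · intro i j
      constructor
      · intro hij
        have hne : (i : ℕ) ≠ (j : ℕ) := by
          intro hcon
          have : i = j := Fin.ext hcon
          rw [this] at hij
          exact G.loopless.irrefl (e j) hij
        have hd1 : G.dist (e i) (e j) = 1 := dist_eq_one_iff_adj.mpr hij
        have hd2 : G.dist (e j) (e i) = 1 := by rwa [SimpleGraph.dist_comm]
        have t1 : G.dist r (e j) ≤ G.dist r (e i) + G.dist (e i) (e j) := hc.dist_triangle
        have t2 : G.dist r (e i) ≤ G.dist r (e j) + G.dist (e j) (e i) := hc.dist_triangle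
        have hdi := he (e i); have hdj := he (e j)
        rw [Equiv.symm_apply_apply] at hdi hdj
        omega
      · intro hij
        have hstep : ∀ i j : Fin n, (i : ℕ) + 1 = (j : ℕ) → G.Adj (e i) (e j) := by
          intro i j hij
          have hdj : G.dist r (e j) = (i : ℕ) + 1 := by
            have := he (e j); rw [Equiv.symm_apply_apply] at this; omega
          obtain ⟨v, hv, hvadj⟩ := exists_adj_pred hc r (e j) hdj
          have hvv := he v
          have hsymm : e.symm v = i := Fin.ext (by omega)
          have : v = e i := by
            calc v = e (e.symm v) := (e.apply_symm_apply v).symm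
              _ = e i := by rw [hsymm]
          rw [← this]; exact hvadj
        rcases hij with h' | h'
        · exact hstep i j h'
        · exact (hstep j i h').symm
  · rintro ⟨e, hr0, ha1, hadj⟩
    have hr : r = e ⟨0, by omega⟩ := by
      have h0 : e.symm r = ⟨0, by omega⟩ := Fin.ext hr0
      rw [← h0, e.apply_symm_apply]
    have ha : a = e ⟨n - 1, by omega⟩ := by
      have h0 : e.symm a = ⟨n - 1, by omega⟩ := Fin.ext ha1
      rw [← h0, e.apply_symm_apply]
    have hdtp : ∀ b : V, distToPath G r a b = ((e.symm b : Fin n) : ℕ) := by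
      intro b
      set β := ((e.symm b : Fin n) : ℕ) with hβdef
      have hβ : β < n := (e.symm b).isLt
      have hb : b = e ⟨β, hβ⟩ := by
        have : e.symm b = ⟨β, hβ⟩ := Fin.ext rfl
        rw [← this, e.apply_symm_apply]
      have hdrb : G.dist r b = β := by
        rw [hr, hb, path_dist e hadj]
        simp
      apply le_antisymm
      · calc distToPath G r a b ≤ G.dist r b := distToPath_le_dist_right r a b
          _ = β := hdrb
      · unfold distToPath
        refine le_csInf ⟨G.dist r b, ⟨b, by simp, rfl⟩⟩ ?_
        rintro x ⟨s, hs, rfl⟩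
        simp only [Set.mem_setOf_eq] at hs
        set σ := ((e.symm s : Fin n) : ℕ) with hσdef
        have hσ : σ < n := (e.symm s).isLt
        have hsv : s = e ⟨σ, hσ⟩ := by
          have : e.symm s = ⟨σ, hσ⟩ := Fin.ext rfl
          rw [← this, e.apply_symm_apply]
        have hd_as : G.dist a s = (n - 1) - σ := by
          rw [ha, hsv, path_dist e hadj]; simp; omega
        have hd_ab : G.dist a b = (n - 1) - β := by
          rw [ha, hb, path_dist e hadj]; simp; omega
        have hd_sb : G.dist s b = max σ β - min σ β := by
          rw [hsv, hb, path_dist e hadj]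
        have hd_rs : G.dist r s = σ := by
          rw [hr, hsv, path_dist e hadj]; simp
        rw [hd_rs]
        rw [hd_as, hd_sb, hd_ab] at hs
        rcases le_total σ β with hcase | hcase
        · simp [max_eq_right hcase, min_eq_left hcase] at hs
          omega
        · omega
    have hsum : ∑ b : V, distToPath G r a b = ∑ i : Fin n, (i : ℕ) := by
      rw [Finset.sum_congr rfl (fun b _ => hdtp b)]
      exact Equiv.sum_comp e.symm (fun i : Fin n => (i : ℕ))
    rw [hsum, Fin.sum_univ_eq_sum_range (fun i => i) n, Nat.mul_comm,
      Finset.sum_range_id_mul_two n]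
end

section
/- Let T be a tree on n vertices with distance matrix D, and let vertex 1 be a fixed vertex. Define R(T) = 2(n−1)·1^T D e_1 − 1^T D 1 (where e_1 is the indicator of vertex 1). Then R(T) = 4 Σ_{1 ≤ a < b ≤ n} d(1, P_{a,b}), where d(1, P_{a,b}) is the distance from vertex 1 to the unique path between a and b. -/
open SimpleGraph

variable {V : Type*} {G : SimpleGraph V}

lemma isPath_append_of {u v w : V} {p : G.Walk u v} {q : G.Walk v w}
    (hp : p.IsPath) (hq : q.IsPath)
    (h : ∀ x ∈ p.support, x ∈ q.support → x = v) : (p.append q).IsPath := by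
  rw [Walk.isPath_def, Walk.support_append]
  refine List.Nodup.append hp.support_nodup hq.support_nodup.tail ?_
  intro x hx hx'
  have hxq : x ∈ q.support := List.mem_of_mem_tail hx'
  have hxv := h x hx hxq
  subst hxv
  have hnd := hq.support_nodup
  rw [q.support_eq_cons] at hnd
  exact (List.nodup_cons.mp hnd).1 hx'

lemma exists_first_mem {v a : V} (q : G.Walk v a) (L : Set V) (ha : a ∈ L) :
    ∃ (m : V) (q1 : G.Walk v m) (q2 : G.Walk m a),
      q1.append q2 = q ∧ m ∈ L ∧ ∀ x ∈ q1.support, x ∈ L → x = m := by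
  induction q with
  | nil => exact ⟨_, Walk.nil, Walk.nil, rfl, ha, by simp⟩
  | @cons u u' b h q ih =>
    by_cases hu : u ∈ L
    · exact ⟨u, Walk.nil, Walk.cons h q, rfl, hu, by simp⟩
    · obtain ⟨m, q1, q2, heq, hm, hfirst⟩ := ih ha
      refine ⟨m, Walk.cons h q1, q2, by rw [Walk.cons_append, heq], hm, ?_⟩
      intro x hx hxL
      rw [Walk.support_cons] at hx
      rcases List.mem_cons.mp hx with rfl | hx
      · exact absurd hxL hu
      · exact hfirst x hx hxL

lemma tree_median (hT : G.IsTree) (v a b : V) :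
    ∃ m : V, G.dist v a = G.dist v m + G.dist m a ∧
      G.dist v b = G.dist v m + G.dist m b ∧
      G.dist a b = G.dist a m + G.dist m b := by
  classical
  obtain ⟨q, hqp, hql⟩ := hT.isConnected.exists_path_of_dist v a
  obtain ⟨p, hpp, hpl⟩ := hT.isConnected.exists_path_of_dist a b
  obtain ⟨m, q1, q2, heq, hm, hfirst⟩ :=
    exists_first_mem q {x | x ∈ p.support} (p.start_mem_support)
  rw [← heq] at hqp
  have hq1p : q1.IsPath := hqp.of_append_left
  have hlen : q1.length + q2.length = G.dist v a := by
    rw [← hql, ← heq, Walk.length_append]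
  have h1 : G.dist v m ≤ q1.length := G.dist_le q1
  have h2 : G.dist m a ≤ q2.length := G.dist_le q2
  have htri : G.dist v a ≤ G.dist v m + G.dist m a := hT.isConnected.dist_triangle
  have hm' : m ∈ p.support := hm
  have hsplit := p.take_spec hm'
  have hplen : (p.takeUntil m hm').length + (p.dropUntil m hm').length = G.dist a b := by
    rw [← hpl]
    have := congrArg Walk.length hsplit
    rwa [Walk.length_append] at this
  have h3 : G.dist a m ≤ (p.takeUntil m hm').length := G.dist_le _
  have h4 : G.dist m b ≤ (p.dropUntil m hm').length := G.dist_le _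
  have htri2 : G.dist a b ≤ G.dist a m + G.dist m b := hT.isConnected.dist_triangle
  have hp2p : (p.dropUntil m hm').IsPath := hpp.dropUntil hm'
  have hr : (q1.append (p.dropUntil m hm')).IsPath := by
    refine isPath_append_of hq1p hp2p ?_
    intro x hx hx'
    exact hfirst x hx (p.support_dropUntil_subset hm' hx')
  obtain ⟨r0, hr0p, hr0l⟩ := hT.isConnected.exists_path_of_dist v b
  have huniq := hT.IsAcyclic.path_unique ⟨_, hr⟩ ⟨r0, hr0p⟩
  have hwalkeq : q1.append (p.dropUntil m hm') = r0 := congrArg Subtype.val huniq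
  have hvb : q1.length + (p.dropUntil m hm').length = G.dist v b := by
    rw [← hr0l, ← hwalkeq, Walk.length_append]
  exact ⟨m, by omega, by omega, by omega⟩

lemma distToPath_eq (hT : G.IsTree) (v a b : V) :
    2 * (distToPath G v a b : ℤ)
      = (G.dist v a : ℤ) + G.dist v b - G.dist a b := by
  obtain ⟨m, h1, h2, h3⟩ := tree_median hT v a b
  have hma : G.dist m a = G.dist a m := SimpleGraph.dist_comm
  have hmS : m ∈ {s | G.dist a s + G.dist s b = G.dist a b} := by
    simp only [Set.mem_setOf_eq]; omega
  have hinf : distToPath G v a b = G.dist v m := by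
    unfold distToPath
    refine le_antisymm (Nat.sInf_le ⟨m, hmS, rfl⟩) ?_
    refine le_csInf ⟨_, ⟨m, hmS, rfl⟩⟩ ?_
    rintro y ⟨s, hs, rfl⟩
    have t1 : G.dist v a ≤ G.dist v s + G.dist s a := hT.isConnected.dist_triangle
    have t2 : G.dist v b ≤ G.dist v s + G.dist s b := hT.isConnected.dist_triangle
    have hsa : G.dist s a = G.dist a s := SimpleGraph.dist_comm
    have hs' : G.dist a s + G.dist s b = G.dist a b := hs
    omega
  rw [hinf]; omega

theorem R_eq_four_sum_dist_to_paths (n : ℕ)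
    (G : SimpleGraph (Fin n)) (hT : G.IsTree) (v : Fin n) :
    2 * ((n : ℤ) - 1) * (∑ a : Fin n, (G.dist a v : ℤ))
      - (∑ a : Fin n, ∑ b : Fin n, (G.dist a b : ℤ))
    = 4 * ∑ a : Fin n, ∑ b ∈ Finset.univ.filter (fun b => a < b),
        (distToPath G v a b : ℤ) := by
  classical
  set g : Fin n → Fin n → ℤ := fun a b => (G.dist v a : ℤ) + G.dist v b - G.dist a b with hg
  have hkey : ∀ a b, 2 * (distToPath G v a b : ℤ) = g a b := fun a b => distToPath_eq hT v a b
  have hgsymm : ∀ a b, g a b = g b a := by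
    intro a b
    simp only [hg]
    rw [SimpleGraph.dist_comm (u := a) (v := b)]
    ring
  have hRHS : (4:ℤ) * ∑ a : Fin n, ∑ b ∈ Finset.univ.filter (fun b => a < b),
        (distToPath G v a b : ℤ)
      = 2 * ∑ a : Fin n, ∑ b ∈ Finset.univ.filter (fun b => a < b), g a b := by
    rw [Finset.mul_sum, Finset.mul_sum]
    refine Finset.sum_congr rfl fun a _ => ?_
    rw [Finset.mul_sum, Finset.mul_sum]
    refine Finset.sum_congr rfl fun b _ => ?_
    rw [← hkey a b]; ring
  rw [hRHS]
  have hswap : ∑ a : Fin n, ∑ b ∈ Finset.univ.filter (fun b => a < b), g a b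
      = ∑ a : Fin n, ∑ b ∈ Finset.univ.filter (fun b => b < a), g a b := by
    rw [Finset.sum_sigma', Finset.sum_sigma']
    refine Finset.sum_nbij' (fun x => ⟨x.2, x.1⟩) (fun x => ⟨x.2, x.1⟩) ?_ ?_ ?_ ?_ ?_
    · intro x hx
      simp only [Finset.mem_sigma, Finset.mem_filter, Finset.mem_univ, true_and] at hx ⊢
      exact hx
    · intro x hx
      simp only [Finset.mem_sigma, Finset.mem_filter, Finset.mem_univ, true_and] at hx ⊢
      exact hx
    · intro x hx; rfl
    · intro x hx; rfl
    · intro x hx; exact hgsymm x.1 x.2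
  have hsplitA : ∀ a : Fin n, (∑ b : Fin n, g a b)
      = (∑ b ∈ Finset.univ.filter (fun b => a < b), g a b)
        + (g a a + ∑ b ∈ Finset.univ.filter (fun b => b < a), g a b) := by
    intro a
    rw [← Finset.sum_filter_add_sum_filter_not Finset.univ (fun b => a < b) (g a)]
    congr 1
    have : (Finset.univ.filter (fun b => ¬ a < b))
        = insert a (Finset.univ.filter (fun b => b < a)) := by
      ext x
      simp only [Finset.mem_filter, Finset.mem_univ, true_and, Finset.mem_insert, not_lt]
      rw [le_iff_lt_or_eq]
      tauto
    rw [this, Finset.sum_insert (by simp)]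
  have hsum : ∑ a : Fin n, ∑ b : Fin n, g a b
      = 2 * (∑ a : Fin n, ∑ b ∈ Finset.univ.filter (fun b => a < b), g a b)
        + ∑ a : Fin n, g a a := by
    calc ∑ a : Fin n, ∑ b : Fin n, g a b
        = ∑ a : Fin n, ((∑ b ∈ Finset.univ.filter (fun b => a < b), g a b)
          + (g a a + ∑ b ∈ Finset.univ.filter (fun b => b < a), g a b)) :=
          Finset.sum_congr rfl fun a _ => hsplitA a
      _ = (∑ a : Fin n, ∑ b ∈ Finset.univ.filter (fun b => a < b), g a b)
          + ((∑ a : Fin n, g a a)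
          + ∑ a : Fin n, ∑ b ∈ Finset.univ.filter (fun b => b < a), g a b) := by
          rw [Finset.sum_add_distrib, Finset.sum_add_distrib]
      _ = _ := by rw [← hswap]; ring
  have hcomm : ∑ a : Fin n, (G.dist v a : ℤ) = ∑ a : Fin n, (G.dist a v : ℤ) := by
    refine Finset.sum_congr rfl fun a _ => ?_
    rw [SimpleGraph.dist_comm]
  have hdiag : ∑ a : Fin n, g a a = 2 * ∑ a : Fin n, (G.dist a v : ℤ) := by
    rw [← hcomm, Finset.mul_sum]
    refine Finset.sum_congr rfl fun a _ => ?_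
    simp only [hg, SimpleGraph.dist_self]
    push_cast
    ring
  have htot : ∑ a : Fin n, ∑ b : Fin n, g a b
      = 2 * (n:ℤ) * (∑ a : Fin n, (G.dist a v : ℤ))
        - ∑ a : Fin n, ∑ b : Fin n, (G.dist a b : ℤ) := by
    have : ∀ a : Fin n, ∑ b : Fin n, g a b
        = (n:ℤ) * (G.dist v a : ℤ) + (∑ b : Fin n, (G.dist v b : ℤ))
          - ∑ b : Fin n, (G.dist a b : ℤ) := by
      intro a
      simp only [hg]
      rw [Finset.sum_sub_distrib, Finset.sum_add_distrib, Finset.sum_const,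
        Finset.card_univ, Fintype.card_fin, nsmul_eq_mul]
    calc ∑ a : Fin n, ∑ b : Fin n, g a b
        = ∑ a : Fin n, ((n:ℤ) * (G.dist v a : ℤ) + (∑ b : Fin n, (G.dist v b : ℤ))
            - ∑ b : Fin n, (G.dist a b : ℤ)) := Finset.sum_congr rfl fun a _ => this a
      _ = _ := by
          rw [Finset.sum_sub_distrib, Finset.sum_add_distrib, ← Finset.mul_sum,
            Finset.sum_const, Finset.card_univ, Fintype.card_fin, nsmul_eq_mul, hcomm]
          ring
  linarith [hsum, hdiag, htot]
end

section
/- Let T be a tree on n vertices with fixed vertex 1 and R(T) = 2(n−1)·Σ_a d(a,1) − Σ_{a,b} d(a,b). Then R(T) = 0 if and only if T is the star K_{1,n−1} with vertex 1 as its centre (i.e., every other vertex is adjacent to vertex 1). -/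
theorem R_eq_zero_iff_star (n : ℕ) {V : Type*} [Fintype V]
    (G : SimpleGraph V) (hT : G.IsTree) (hn : Fintype.card V = n) (v : V) :
    2 * ((n : ℤ) - 1) * (∑ a : V, (G.dist a v : ℤ))
        - (∑ a : V, ∑ b : V, (G.dist a b : ℤ)) = 0 ↔
      ∀ w : V, w ≠ v → G.Adj v w := by
  classical
  have hconn := hT.isConnected
  set g : V → V → ℤ := fun a b =>
    if a = b then 0 else (G.dist a v : ℤ) + (G.dist v b : ℤ) - (G.dist a b : ℤ) with hg
  have hg_nonneg : ∀ a b : V, 0 ≤ g a b := by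
    intro a b
    simp only [hg]
    split
    · exact le_refl 0
    · have h1 := hconn.dist_triangle (u := a) (v := v) (w := b)
      have h2 : (G.dist a b : ℤ) ≤ (G.dist a v : ℤ) + (G.dist v b : ℤ) := by
        exact_mod_cast h1
      linarith
  have key : 2 * ((n : ℤ) - 1) * (∑ a : V, (G.dist a v : ℤ))
        - (∑ a : V, ∑ b : V, (G.dist a b : ℤ)) = ∑ a : V, ∑ b : V, g a b := by
    have hsum : ∀ a : V, ∑ b : V, g a b =
        (∑ b : V, ((G.dist a v : ℤ) + (G.dist v b : ℤ) - (G.dist a b : ℤ)))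
          - 2 * (G.dist a v : ℤ) := by
      intro a
      have h1 : ∑ b : V, g a b =
          (∑ b : V, ((G.dist a v : ℤ) + (G.dist v b : ℤ) - (G.dist a b : ℤ)))
            - ∑ b : V, (if a = b then (G.dist a v : ℤ) + (G.dist v b : ℤ) - (G.dist a b : ℤ) else 0) := by
        rw [← Finset.sum_sub_distrib]
        apply Finset.sum_congr rfl
        intro b _
        by_cases hab : a = b
        · simp [hg, hab]
        · simp [hg, hab]
      rw [h1, Finset.sum_ite_eq Finset.univ a
        (fun b => (G.dist a v : ℤ) + (G.dist v b : ℤ) - (G.dist a b : ℤ))]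
      simp [SimpleGraph.dist_self, SimpleGraph.dist_comm (u := v) (v := a)]
      ring
    rw [Finset.sum_congr rfl (fun a _ => hsum a)]
    rw [Finset.sum_sub_distrib]
    have h2 : ∀ a : V, ∑ b : V, ((G.dist a v : ℤ) + (G.dist v b : ℤ) - (G.dist a b : ℤ))
        = (n : ℤ) * (G.dist a v : ℤ) + (∑ b : V, (G.dist v b : ℤ))
          - ∑ b : V, (G.dist a b : ℤ) := by
      intro a
      rw [Finset.sum_sub_distrib, Finset.sum_add_distrib, Finset.sum_const, ← hn]
      simp [mul_comm]
    rw [Finset.sum_congr rfl (fun a _ => h2 a)]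
    rw [Finset.sum_sub_distrib, Finset.sum_add_distrib, ← Finset.mul_sum,
      Finset.sum_const, ← hn]
    have h3 : (∑ b : V, (G.dist v b : ℤ)) = ∑ a : V, (G.dist a v : ℤ) := by
      apply Finset.sum_congr rfl; intro b _; rw [SimpleGraph.dist_comm]
    rw [h3, ← Finset.mul_sum]
    simp only [Finset.card_univ, hn]
    ring
  rw [key]
  have hzero : (∑ a : V, ∑ b : V, g a b) = 0 ↔ ∀ a b : V, g a b = 0 := by
    rw [Finset.sum_eq_zero_iff_of_nonneg
      (fun a _ => Finset.sum_nonneg (fun b _ => hg_nonneg a b))]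
    constructor
    · intro h a b
      exact (Finset.sum_eq_zero_iff_of_nonneg (fun b _ => hg_nonneg a b)).mp
        (h a (Finset.mem_univ a)) b (Finset.mem_univ b)
    · intro h a _
      exact Finset.sum_eq_zero (fun b _ => h a b)
  rw [hzero]
  have heq : (∀ a b : V, g a b = 0) ↔
      ∀ a b : V, a ≠ b → G.dist a b = G.dist a v + G.dist v b := by
    constructor
    · intro h a b hab
      have := h a b
      simp only [hg, if_neg hab] at this
      omega
    · intro h a b
      by_cases hab : a = b
      · simp [hg, hab]
      · simp only [hg, if_neg hab]
        have := h a b hab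
        omega
  rw [heq]
  constructor
  · intro h w hw
    by_contra hadj
    have hdw : 2 ≤ G.dist w v := by
      have h1 : 0 < G.dist w v := hconn.pos_dist_of_ne hw
      have h2 : G.dist w v ≠ 1 := by
        intro h1
        exact hadj ((SimpleGraph.dist_eq_one_iff_adj.mp h1).symm)
      omega
    obtain ⟨p, hp⟩ := SimpleGraph.exists_walk_of_dist_ne_zero (by omega : G.dist w v ≠ 0)
    cases p with
    | nil => simp at hp; simp at hdw
    | cons huw q =>
      rename_i u
      have hadj_wu : G.Adj w u := huw
      have huw_ne : u ≠ w := hadj_wu.ne'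
      have hdu : G.dist u w = 1 := SimpleGraph.dist_eq_one_iff_adj.mpr hadj_wu.symm
      have hthis := h u w huw_ne
      rw [hdu] at hthis
      have hvw : G.dist v w = G.dist w v := SimpleGraph.dist_comm
      omega
  · intro h a b hab
    by_cases hav : a = v
    · subst hav; simp
    · by_cases hbv : b = v
      · subst hbv; simp [SimpleGraph.dist_comm]
      · have hav' : G.Adj v a := h a hav
        have hbv' : G.Adj v b := h b hbv
        have h1 : G.dist a v = 1 := SimpleGraph.dist_eq_one_iff_adj.mpr hav'.symm
        have h2 : G.dist v b = 1 := SimpleGraph.dist_eq_one_iff_adj.mpr hbv'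
        rw [h1, h2]
        have hle : G.dist a b ≤ 2 := by
          have := hconn.dist_triangle (u := a) (v := v) (w := b)
          omega
        have hpos : 0 < G.dist a b := hconn.pos_dist_of_ne hab
        have hne1 : G.dist a b ≠ 1 := by
          intro h1'
          have hab' : G.Adj a b := SimpleGraph.dist_eq_one_iff_adj.mp h1'
          have hw1 : (SimpleGraph.Walk.cons hab' SimpleGraph.Walk.nil : G.Walk a b).IsPath := by
            simp [SimpleGraph.Walk.isPath_def]
            exact hab
          have hw2 : (SimpleGraph.Walk.cons hav'.symm
              (SimpleGraph.Walk.cons hbv' SimpleGraph.Walk.nil) : G.Walk a b).IsPath := by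
            simp [SimpleGraph.Walk.isPath_def]
            exact ⟨⟨hav, hab⟩, hbv'.ne⟩
          have hpq := hT.IsAcyclic.path_unique ⟨_, hw1⟩ ⟨_, hw2⟩
          have hlen := congrArg (fun p : G.Path a b => (p : G.Walk a b).length) hpq
          simp at hlen
        omega
end

section
/- Let T be a tree on n vertices with fixed vertex 1 and R(T) = 2(n−1)·Σ_a d(a,1) − Σ_{a,b} d(a,b). Then R(T) = (2/3)·n(n−1)(n−2) if and only if T is a path on n vertices with vertex 1 as one of its end vertices. -/
open Finset SimpleGraph

/-- `G` is a path graph on all of `V` having `v` as one of its two end vertices. -/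
def IsPathWithEnd {V : Type*} [Fintype V] (G : SimpleGraph V) (v : V) : Prop :=
  ∃ e : Fin (Fintype.card V) ≃ V,
    ((e.symm v : ℕ) = 0 ∨ (e.symm v : ℕ) = Fintype.card V - 1) ∧
    ∀ i j : Fin (Fintype.card V), G.Adj (e i) (e j) ↔ ((i : ℕ) + 1 = j ∨ (j : ℕ) + 1 = i)

namespace RMaxAux

variable {V : Type*} [Fintype V] {G : SimpleGraph V}

lemma exists_dist_pred (hconn : G.Connected) (v a : V) (m : ℕ)
    (h : G.dist a v = m + 1) : ∃ b, G.dist b v = m := by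
  obtain ⟨p, hp⟩ := (hconn a v).exists_walk_length_eq_dist
  rw [h] at hp
  cases p with
  | nil => simp at hp
  | cons hadj q =>
    rename_i b
    refine ⟨b, le_antisymm ?_ ?_⟩
    · calc G.dist b v ≤ q.length := dist_le q
        _ = m := by simpa using hp
    · have h1 : G.dist a b ≤ 1 := by
        simpa using dist_le (Walk.cons hadj Walk.nil)
      have h2 := hconn.dist_triangle (u := a) (v := b) (w := v)
      omega

lemma exists_dist_eq (hconn : G.Connected) (v : V) :
    ∀ m, ∀ a : V, G.dist a v = m → ∀ k ≤ m, ∃ b, G.dist b v = k := by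
  intro m
  induction m with
  | zero =>
    intro a _ k hk
    exact ⟨v, by simp [Nat.le_zero.mp hk]⟩
  | succ m ih =>
    intro a ha k hk
    rcases Nat.eq_or_lt_of_le hk with h | h
    · exact ⟨a, by omega⟩
    · obtain ⟨b, hb⟩ := exists_dist_pred hconn v a m ha
      exact ih b hb k (by omega)

lemma dist_lt_card (hconn : G.Connected) (a b : V) : G.dist a b < Fintype.card V := by
  obtain ⟨p, hp, hl⟩ := hconn.exists_path_of_dist a b
  exact hl ▸ hp.length_lt

lemma level_card [DecidableEq V] (hconn : G.Connected) (v : V) (k : ℕ)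
    [DecidablePred fun a : V => k < G.dist a v]
    (h : ∃ a, k < G.dist a v) :
    k + 1 + (univ.filter fun a : V => k < G.dist a v).card ≤ Fintype.card V := by
  classical
  obtain ⟨a, ha⟩ := h
  have hcov : ∀ i : Fin (k+1), ∃ b, G.dist b v = (i : ℕ) :=
    fun i => exists_dist_eq hconn v (G.dist a v) a rfl i (by omega)
  choose g hg using hcov
  have h1 : k + 1 ≤ (univ.filter fun b : V => G.dist b v ≤ k).card := by
    calc k + 1 = Fintype.card (Fin (k+1)) := (Fintype.card_fin _).symm
      _ ≤ Fintype.card {b : V // G.dist b v ≤ k} := by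
          refine Fintype.card_le_of_injective
            (fun i => ⟨g i, by rw [hg i]; omega⟩) ?_
          intro i j hij
          have : G.dist (g i) v = G.dist (g j) v := by
            simpa using congrArg (fun x : {b : V // G.dist b v ≤ k} => G.dist x.1 v) hij
          rw [hg i, hg j] at this
          exact Fin.ext this
      _ = (univ.filter fun b : V => G.dist b v ≤ k).card := Fintype.card_subtype _
  have h2 := Finset.card_filter_add_card_filter_not (s := (univ : Finset V))
    (p := fun b : V => G.dist b v ≤ k)
  simp only [not_le, Finset.card_univ] at h2
  omega

lemma sum_ite_lt (K x : ℕ) (h : x ≤ K) :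
    (∑ k ∈ range K, if k < x then 1 else 0) = x := by
  rw [← Finset.card_filter]
  have : (range K).filter (fun k => k < x) = range x := by
    ext k; simp [Finset.mem_filter, Finset.mem_range]; omega
  rw [this, Finset.card_range]

lemma sum_ite_min (K x y : ℕ) (hx : x ≤ K) :
    (∑ k ∈ range K, if k < x ∧ k < y then 1 else 0) = min x y := by
  rw [← Finset.card_filter]
  have : (range K).filter (fun k => k < x ∧ k < y) = range (min x y) := by
    ext k; simp [Finset.mem_filter, Finset.mem_range]; omega
  rw [this, Finset.card_range]

lemma sum3 : ∀ n : ℕ, 3 * ∑ k ∈ range n, ((k:ℤ)^2 - k) = (n:ℤ) * ((n:ℤ)-1) * ((n:ℤ)-2) := by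
  intro n
  induction n with
  | zero => simp
  | succ m ih =>
    rw [Finset.sum_range_succ]
    push_cast
    push_cast at ih
    linear_combination ih

lemma sum3' (n : ℕ) :
    3 * ∑ k ∈ range n, (((n:ℤ) - 1 - k)^2 - ((n:ℤ) - 1 - k))
      = (n:ℤ) * ((n:ℤ)-1) * ((n:ℤ)-2) := by
  have hr := Finset.sum_range_reflect (fun j : ℕ => ((j:ℤ)^2 - j)) n
  have hc : ∀ j ∈ range n, (((n - 1 - j : ℕ) : ℤ)^2 - ((n - 1 - j : ℕ) : ℤ))
      = (((n:ℤ) - 1 - j)^2 - ((n:ℤ) - 1 - j)) := by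
    intro j hj
    rw [Finset.mem_range] at hj
    have : ((n - 1 - j : ℕ) : ℤ) = (n:ℤ) - 1 - j := by
      have h1 : 1 + j ≤ n := by omega
      push_cast [Nat.sub_sub, Nat.cast_sub h1]
      ring
    rw [this]
  rw [Finset.sum_congr rfl hc] at hr
  rw [hr]
  exact sum3 n

set_option maxHeartbeats 1000000 in
lemma forward (hconn : G.Connected) (v : V)
    (h : 2 * ((Fintype.card V : ℚ) - 1) * (∑ a : V, (G.dist a v : ℚ))
        - (∑ a : V, ∑ b : V, (G.dist a b : ℚ))
      = (2 / 3) * (Fintype.card V : ℚ) * ((Fintype.card V : ℚ) - 1)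
          * ((Fintype.card V : ℚ) - 2)) :
    IsPathWithEnd G v := by
  classical
  set n := Fintype.card V with hn
  have hdlt : ∀ a : V, G.dist a v < n := fun a => dist_lt_card hconn a v
  have hZ : 6 * ((n:ℤ) - 1) * (∑ a : V, (G.dist a v : ℤ))
      - 3 * (∑ a : V, ∑ b : V, (G.dist a b : ℤ))
      = 2 * (n:ℤ) * ((n:ℤ) - 1) * ((n:ℤ) - 2) := by
    have h3 : ((6 * ((n:ℤ) - 1) * (∑ a : V, (G.dist a v : ℤ))
        - 3 * (∑ a : V, ∑ b : V, (G.dist a b : ℤ)) : ℤ) : ℚ)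
        = ((2 * (n:ℤ) * ((n:ℤ) - 1) * ((n:ℤ) - 2) : ℤ) : ℚ) := by
      push_cast
      linear_combination 3 * h
    exact_mod_cast h3
  have pair : ∀ a b : V, G.dist a v + G.dist b v
      ≤ G.dist a b + 2 * min (G.dist a v) (G.dist b v) := by
    intro a b
    have hcomm : G.dist b a = G.dist a b := SimpleGraph.dist_comm
    rcases le_total (G.dist a v) (G.dist b v) with hab | hab
    · have h2 := hconn.dist_triangle (u := b) (v := a) (w := v)
      rw [min_eq_left hab]
      omega
    · have h2 := hconn.dist_triangle (u := a) (v := b) (w := v)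
      rw [min_eq_right hab]
      omega
  set c : ℕ → ℕ := fun k => (univ.filter fun a : V => k < G.dist a v).card with hc
  have hcf : ∀ k, c k = ∑ a : V, if k < G.dist a v then 1 else 0 :=
    fun k => Finset.card_filter _ _
  have hS1 : ∑ a : V, G.dist a v = ∑ k ∈ range n, c k := by
    have h1 : ∀ a : V, G.dist a v = ∑ k ∈ range n, if k < G.dist a v then 1 else 0 :=
      fun a => (sum_ite_lt n (G.dist a v) (hdlt a).le).symm
    rw [Finset.sum_congr rfl fun a _ => h1 a, Finset.sum_comm]
    exact Finset.sum_congr rfl fun k _ => (hcf k).symm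
  have hM : ∑ a : V, ∑ b : V, min (G.dist a v) (G.dist b v) = ∑ k ∈ range n, c k * c k := by
    calc ∑ a : V, ∑ b : V, min (G.dist a v) (G.dist b v)
        = ∑ a : V, ∑ k ∈ range n, ∑ b : V,
            if k < G.dist a v ∧ k < G.dist b v then 1 else 0 := by
          refine Finset.sum_congr rfl fun a _ => ?_
          rw [Finset.sum_comm]
          exact Finset.sum_congr rfl fun b _ =>
            (sum_ite_min n (G.dist a v) (G.dist b v) (hdlt a).le).symm
      _ = ∑ k ∈ range n, ∑ a : V, ∑ b : V,
            if k < G.dist a v ∧ k < G.dist b v then 1 else 0 := Finset.sum_comm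
      _ = ∑ k ∈ range n, c k * c k := by
          refine Finset.sum_congr rfl fun k _ => ?_
          have hsplit : ∀ a b : V, (if k < G.dist a v ∧ k < G.dist b v then (1:ℕ) else 0)
              = (if k < G.dist a v then 1 else 0) * (if k < G.dist b v then 1 else 0) := by
            intro a b
            by_cases h1 : k < G.dist a v <;> by_cases h2 : k < G.dist b v <;> simp [h1, h2]
          simp_rw [hsplit]
          rw [← Finset.sum_mul_sum, hcf k]
  have hck : ∀ k, c k = 0 ∨ k + 1 + c k ≤ n := by
    intro k
    by_cases hex : ∃ a, k < G.dist a v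
    · exact Or.inr (level_card hconn v k hex)
    · left
      rw [hc]
      simp only
      rw [Finset.card_eq_zero, Finset.filter_eq_empty_iff]
      push_neg at hex
      exact fun a _ => not_lt.mpr (hex a)
  have hre : ∑ a : V, ∑ b : V, (G.dist a b + 2 * min (G.dist a v) (G.dist b v))
      = (∑ a : V, ∑ b : V, G.dist a b)
        + 2 * ∑ a : V, ∑ b : V, min (G.dist a v) (G.dist b v) := by
    simp only [Finset.sum_add_distrib, Finset.mul_sum]
  have key1 : ∑ a : V, ∑ b : V, (G.dist a v + G.dist b v)
      ≤ ∑ a : V, ∑ b : V, (G.dist a b + 2 * min (G.dist a v) (G.dist b v)) :=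
    Finset.sum_le_sum fun a _ => Finset.sum_le_sum fun b _ => pair a b
  have hLHS : ∑ a : V, ∑ b : V, (G.dist a v + G.dist b v)
      = 2 * n * ∑ a : V, G.dist a v := by
    have h1 : ∀ a : V, ∑ b : V, (G.dist a v + G.dist b v)
        = n * G.dist a v + ∑ b : V, G.dist b v := by
      intro a
      rw [Finset.sum_add_distrib, Finset.sum_const, Finset.card_univ, smul_eq_mul, ← hn]
    rw [Finset.sum_congr rfl fun a _ => h1 a, Finset.sum_add_distrib, ← Finset.mul_sum,
      Finset.sum_const, Finset.card_univ, smul_eq_mul, ← hn]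
    ring
  have key2 : ∑ k ∈ range n, (((c k : ℤ))^2 - (c k : ℤ))
      ≤ ∑ k ∈ range n, (((n:ℤ) - 1 - k)^2 - ((n:ℤ) - 1 - k)) := by
    refine Finset.sum_le_sum fun k hk => ?_
    rw [Finset.mem_range] at hk
    rcases hck k with h0 | hle
    · rw [h0]
      push_cast
      have h1 : (1:ℤ) ≤ (n:ℤ) - 1 - k ∨ ((n:ℤ) - 1 - k) = 0 ∨ (n:ℤ) - 1 - k ≤ -1 := by omega
      rcases h1 with h1 | h1 | h1 <;> nlinarith
    · have h1 : (c k : ℤ) ≤ (n:ℤ) - 1 - k := by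
        have : (k:ℤ) + 1 + (c k : ℤ) ≤ (n:ℤ) := by exact_mod_cast hle
        omega
      have h2 : (0:ℤ) ≤ (c k : ℤ) := Int.natCast_nonneg _
      have h3 : (0:ℤ) ≤ (((n:ℤ) - 1 - k) - (c k : ℤ)) * (((n:ℤ) - 1 - k) + (c k : ℤ) - 1) := by
        rcases eq_or_lt_of_le h2 with hc0 | hc1
        · have h4 : (0:ℤ) ≤ (n:ℤ) - 1 - k := by omega
          rw [← hc0]
          rcases eq_or_lt_of_le h4 with h5 | h5
          · nlinarith
          · nlinarith
        · nlinarith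
      nlinarith [h3]
  have heqN : ∑ a : V, ∑ b : V, (G.dist a v + G.dist b v)
      = ∑ a : V, ∑ b : V, (G.dist a b + 2 * min (G.dist a v) (G.dist b v)) := by
    refine le_antisymm key1 ?_
    have hk3 := sum3' n
    have hsplit : (∑ k ∈ range n, (((c k : ℤ))^2 - (c k : ℤ)))
        = ∑ k ∈ range n, ((c k : ℤ))^2 - ∑ k ∈ range n, (c k : ℤ) :=
      Finset.sum_sub_distrib _ _
    have hS1Z : (∑ a : V, (G.dist a v : ℤ)) = ∑ k ∈ range n, (c k : ℤ) := by
      rw [show (∑ a : V, (G.dist a v : ℤ)) = ((∑ a : V, G.dist a v : ℕ) : ℤ) by push_cast; rfl,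
        hS1]
      push_cast
      rfl
    have hMZ : (∑ a : V, ∑ b : V, (min (G.dist a v) (G.dist b v) : ℤ))
        = ∑ k ∈ range n, ((c k : ℤ))^2 := by
      rw [show (∑ a : V, ∑ b : V, (min (G.dist a v) (G.dist b v) : ℤ))
          = ((∑ a : V, ∑ b : V, min (G.dist a v) (G.dist b v) : ℕ) : ℤ) by push_cast; rfl, hM]
      push_cast [sq]
      rfl
    have goalZ : (∑ a : V, ∑ b : V, ((G.dist a b : ℤ) + 2 * (min (G.dist a v) (G.dist b v) : ℤ)))
        ≤ ∑ a : V, ∑ b : V, ((G.dist a v : ℤ) + (G.dist b v : ℤ)) := by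
      have e1 : ∑ a : V, ∑ b : V, ((G.dist a v : ℤ) + (G.dist b v : ℤ))
          = 2 * (n:ℤ) * ∑ a : V, (G.dist a v : ℤ) := by
        rw [show (∑ a : V, ∑ b : V, ((G.dist a v : ℤ) + (G.dist b v : ℤ)))
            = ((∑ a : V, ∑ b : V, (G.dist a v + G.dist b v) : ℕ) : ℤ) by push_cast; rfl, hLHS]
        push_cast
        ring
      have e2 : ∑ a : V, ∑ b : V, ((G.dist a b : ℤ) + 2 * (min (G.dist a v) (G.dist b v) : ℤ))
          = (∑ a : V, ∑ b : V, (G.dist a b : ℤ))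
            + 2 * ∑ a : V, ∑ b : V, (min (G.dist a v) (G.dist b v) : ℤ) := by
        simp only [Finset.sum_add_distrib, Finset.mul_sum]
      rw [e1, e2, hMZ]
      linarith [hZ, key2, hk3, hsplit, hS1Z]
    exact_mod_cast goalZ
  have hterm : ∀ a b : V, G.dist a v + G.dist b v
      = G.dist a b + 2 * min (G.dist a v) (G.dist b v) := by
    intro a b
    have h1 := (Finset.sum_eq_sum_iff_of_le
      (fun x (_ : x ∈ (univ : Finset V)) => Finset.sum_le_sum
        (fun y (_ : y ∈ (univ : Finset V)) => pair x y))).mp heqN a (Finset.mem_univ a)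
    exact (Finset.sum_eq_sum_iff_of_le fun y _ => pair a y).mp h1 b (Finset.mem_univ b)
  have hinj : Function.Injective (fun a : V => G.dist a v) := by
    intro a b hab
    simp only at hab
    have ht := hterm a b
    rw [hab, min_self] at ht
    have h0 : G.dist a b = 0 := by omega
    exact hconn.dist_eq_zero_iff.mp h0
  have hfnc : ∀ a : V, G.dist a v < Fintype.card V := fun a => hdlt a
  let f : V → Fin (Fintype.card V) := fun a => ⟨G.dist a v, hfnc a⟩
  have hfinj : Function.Injective f := fun a b hab => hinj (congrArg Fin.val hab)
  have hbij : Function.Bijective f :=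
    (Fintype.bijective_iff_injective_and_card f).mpr ⟨hfinj, by simp⟩
  refine ⟨(Equiv.ofBijective f hbij).symm, Or.inl ?_, ?_⟩
  · rw [Equiv.symm_symm]
    show (f v : ℕ) = 0
    simp [f]
  · intro i j
    have hfi : G.dist ((Equiv.ofBijective f hbij).symm i) v = (i : ℕ) :=
      congrArg Fin.val (Equiv.ofBijective_apply_symm_apply f hbij i)
    have hfj : G.dist ((Equiv.ofBijective f hbij).symm j) v = (j : ℕ) :=
      congrArg Fin.val (Equiv.ofBijective_apply_symm_apply f hbij j)
    have ht := hterm ((Equiv.ofBijective f hbij).symm i) ((Equiv.ofBijective f hbij).symm j)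
    rw [hfi, hfj] at ht
    rw [← SimpleGraph.dist_eq_one_iff_adj]
    omega

lemma gauss (n : ℕ) : 2 * ∑ i ∈ range n, (i:ℤ) = (n:ℤ) * ((n:ℤ) - 1) := by
  induction n with
  | zero => simp
  | succ m ih =>
    rw [Finset.sum_range_succ]
    push_cast
    push_cast at ih
    linear_combination ih

lemma rowsum (m : ℕ) : 2 * ∑ i ∈ range m, (Nat.dist i m : ℤ) = (m:ℤ) * ((m:ℤ)+1) := by
  induction m with
  | zero => simp
  | succ p ih =>
    rw [Finset.sum_range_succ]
    have hstep : ∀ i ∈ range p, (Nat.dist i (p+1) : ℤ) = (Nat.dist i p : ℤ) + 1 := by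
      intro i hi
      rw [Finset.mem_range] at hi
      have h : Nat.dist i (p+1) = Nat.dist i p + 1 := by
        simp only [Nat.dist]
        omega
      rw [h]
      push_cast
      ring
    rw [Finset.sum_congr rfl hstep, Finset.sum_add_distrib]
    have h1 : Nat.dist p (p+1) = 1 := by
      simp only [Nat.dist]
      omega
    rw [h1]
    rw [Finset.sum_const, Finset.card_range]
    push_cast
    linear_combination ih

lemma sumdd (n : ℕ) :
    3 * ∑ i ∈ range n, ∑ j ∈ range n, (Nat.dist i j : ℤ) = (n:ℤ)^3 - n := by
  induction n with
  | zero => simp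
  | succ m ih =>
    rw [Finset.sum_range_succ]
    have hin : ∀ i ∈ range m, ∑ j ∈ range (m+1), (Nat.dist i j : ℤ)
        = (∑ j ∈ range m, (Nat.dist i j : ℤ)) + (Nat.dist i m : ℤ) :=
      fun i _ => Finset.sum_range_succ _ _
    rw [Finset.sum_congr rfl hin, Finset.sum_add_distrib, Finset.sum_range_succ]
    have h0 : (Nat.dist m m : ℤ) = 0 := by simp [Nat.dist_self]
    have hcomm : ∀ j ∈ range m, (Nat.dist m j : ℤ) = (Nat.dist j m : ℤ) := by
      intro j _
      rw [Nat.dist_comm]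
    rw [h0, Finset.sum_congr rfl hcomm]
    have hrow := rowsum m
    push_cast
    push_cast at ih
    linear_combination ih + 3 * hrow

lemma distend (n : ℕ) : ∑ i ∈ range n, (Nat.dist i (n-1) : ℤ) = ∑ i ∈ range n, (i:ℤ) := by
  have hr := Finset.sum_range_reflect (fun j : ℕ => (Nat.dist j (n-1) : ℤ)) n
  rw [← hr]
  refine Finset.sum_congr rfl fun j hj => ?_
  rw [Finset.mem_range] at hj
  have h : Nat.dist (n - 1 - j) (n-1) = j := by
    simp only [Nat.dist]
    omega
  rw [h]

set_option maxHeartbeats 1000000 in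
lemma reverse (hconn : G.Connected) (v : V) (hP : IsPathWithEnd G v) :
    2 * ((Fintype.card V : ℚ) - 1) * (∑ a : V, (G.dist a v : ℚ))
        - (∑ a : V, ∑ b : V, (G.dist a b : ℚ))
      = (2 / 3) * (Fintype.card V : ℚ) * ((Fintype.card V : ℚ) - 1)
          * ((Fintype.card V : ℚ) - 2) := by
  classical
  set n := Fintype.card V with hn
  obtain ⟨e, hend, hadj⟩ := hP
  have hadj1 : ∀ a b : V, G.Adj a b → Nat.dist (e.symm a : ℕ) (e.symm b : ℕ) = 1 := by
    intro a b hab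
    have h1 := (hadj (e.symm a) (e.symm b)).mp (by simpa using hab)
    simp only [Nat.dist]
    omega
  have hlow : ∀ (a b : V) (p : G.Walk a b),
      Nat.dist (e.symm a : ℕ) (e.symm b : ℕ) ≤ p.length := by
    intro a b p
    induction p with
    | nil => simp
    | @cons x y z hxy q ih =>
      calc Nat.dist (e.symm x : ℕ) (e.symm z : ℕ)
          ≤ Nat.dist (e.symm x : ℕ) (e.symm y : ℕ)
            + Nat.dist (e.symm y : ℕ) (e.symm z : ℕ) :=
            Nat.dist.triangle_inequality _ _ _
        _ ≤ 1 + q.length := by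
            rw [hadj1 x y hxy]
            omega
        _ = (Walk.cons hxy q).length := by
            rw [Walk.length_cons]
            omega
  have hup : ∀ k : ℕ, ∀ i j : Fin n, (i:ℕ) + k = (j:ℕ) → G.dist (e i) (e j) ≤ k := by
    intro k
    induction k with
    | zero =>
      intro i j hij
      have h : i = j := Fin.ext (by omega)
      rw [h]
      simp
    | succ k ih =>
      intro i j hij
      have hlt : (i:ℕ) + 1 < n := by
        have := j.isLt
        omega
      have ha : G.Adj (e i) (e ⟨(i:ℕ)+1, by omega⟩) :=
        (hadj i ⟨(i:ℕ)+1, by omega⟩).mpr (Or.inl rfl)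
      have h1 : G.dist (e i) (e ⟨(i:ℕ)+1, by omega⟩) ≤ 1 := by
        simpa using dist_le (Walk.cons ha Walk.nil)
      have h2 : G.dist (e ⟨(i:ℕ)+1, by omega⟩) (e j) ≤ k := ih _ j (by simp; omega)
      have h3 := hconn.dist_triangle (u := e i) (v := e ⟨(i:ℕ)+1, by omega⟩) (w := e j)
      omega
  have hdist : ∀ i j : Fin n, G.dist (e i) (e j) = Nat.dist (i:ℕ) (j:ℕ) := by
    intro i j
    refine le_antisymm ?_ ?_
    · rcases le_total (i:ℕ) (j:ℕ) with hij | hij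
      · have h1 := hup ((j:ℕ) - i) i j (by omega)
        have h2 : Nat.dist (i:ℕ) (j:ℕ) = (j:ℕ) - i := by
          simp only [Nat.dist]
          omega
        omega
      · have h1 := hup ((i:ℕ) - j) j i (by omega)
        have h2 : Nat.dist (i:ℕ) (j:ℕ) = (i:ℕ) - j := by
          simp only [Nat.dist]
          omega
        have h3 : G.dist (e i) (e j) = G.dist (e j) (e i) := SimpleGraph.dist_comm
        omega
    · obtain ⟨p, hp⟩ := (hconn (e i) (e j)).exists_walk_length_eq_dist
      have h1 := hlow (e i) (e j) p
      rw [hp] at h1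
      simpa using h1
  have hS1Z : 2 * (∑ a : V, (G.dist a v : ℤ)) = (n:ℤ) * ((n:ℤ) - 1) := by
    have hv : e (e.symm v) = v := e.apply_symm_apply v
    have h1 : ∑ a : V, (G.dist a v : ℤ)
        = ∑ i ∈ range n, (Nat.dist i ((e.symm v : ℕ)) : ℤ) := by
      rw [← Equiv.sum_comp e (fun a => (G.dist a v : ℤ)),
        ← Fin.sum_univ_eq_sum_range (fun i => (Nat.dist i ((e.symm v : ℕ)) : ℤ)) n]
      refine Finset.sum_congr rfl fun i _ => ?_
      conv_lhs => rw [← hv]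
      rw [hdist i (e.symm v)]
    rcases hend with h0 | hlast
    · rw [h1, h0]
      have h2 : ∀ i ∈ range n, (Nat.dist i 0 : ℤ) = (i:ℤ) := by
        intro i _
        have : Nat.dist i 0 = i := by
          simp only [Nat.dist]
          omega
        rw [this]
      rw [Finset.sum_congr rfl h2]
      exact gauss n
    · rw [h1, hlast, distend]
      exact gauss n
  have hS2Z : 3 * (∑ a : V, ∑ b : V, (G.dist a b : ℤ)) = (n:ℤ)^3 - n := by
    have h2 : ∑ a : V, ∑ b : V, (G.dist a b : ℤ)
        = ∑ i ∈ range n, ∑ j ∈ range n, (Nat.dist i j : ℤ) := by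
      rw [← Equiv.sum_comp e (fun a => ∑ b : V, (G.dist a b : ℤ)),
        ← Fin.sum_univ_eq_sum_range (fun i => ∑ j ∈ range n, (Nat.dist i j : ℤ)) n]
      refine Finset.sum_congr rfl fun i _ => ?_
      rw [← Equiv.sum_comp e (fun b => (G.dist (e i) b : ℤ)),
        ← Fin.sum_univ_eq_sum_range (fun j => (Nat.dist (i:ℕ) j : ℤ)) n]
      exact Finset.sum_congr rfl fun j _ => by rw [hdist i j]
    rw [h2]
    exact sumdd n
  have c1 := congrArg (fun z : ℤ => (z : ℚ)) hS1Z
  have c2 := congrArg (fun z : ℤ => (z : ℚ)) hS2Z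
  push_cast at c1 c2
  linear_combination ((n:ℚ) - 1) * c1 - (1/3 : ℚ) * c2

end RMaxAux


theorem R_eq_max_iff_path (n : ℕ) {V : Type*} [Fintype V]
    (G : SimpleGraph V) (hT : G.IsTree) (hn : Fintype.card V = n) (v : V) :
    2 * ((n : ℚ) - 1) * (∑ a : V, (G.dist a v : ℚ))
        - (∑ a : V, ∑ b : V, (G.dist a b : ℚ))
      = (2 / 3) * (n : ℚ) * ((n : ℚ) - 1) * ((n : ℚ) - 2) ↔
    IsPathWithEnd G v := by
  subst hn
  have hconn : G.Connected := hT.isConnected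
  exact ⟨fun h => RMaxAux.forward hconn v h, fun hP => RMaxAux.reverse hconn v hP⟩
end

section
/- For n ≥ 3, the polynomial g_e(c) = 3c⁴ + (4n²−4n−6)c³ + (−3n³+3n−1)c² + 3n³ − 3n² satisfies g_e(3n/4 + 21/64) > 0 and g_e(3n/4 + 21/64 − 7/(4n)) < 0; hence g_e has a root in the interval (3n/4 + 21/64 − 7/(4n), 3n/4 + 21/64). -/
/-- The quartic `g_e(c) = 3c⁴ + (4n²−4n−6)c³ + (−3n³+3n−1)c² + 3n³ − 3n²`. -/
def gE (n c : ℝ) : ℝ :=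
  3 * c ^ 4 + (4 * n ^ 2 - 4 * n - 6) * c ^ 3 + (-3 * n ^ 3 + 3 * n - 1) * c ^ 2
    + 3 * n ^ 3 - 3 * n ^ 2

theorem gE_root_localization (n : ℝ) (hn : 3 ≤ n) :
    gE n (3 * n / 4 + 21 / 64) > 0 ∧
    gE n (3 * n / 4 + 21 / 64 - 7 / (4 * n)) < 0 ∧
    ∃ c ∈ Set.Ioo (3 * n / 4 + 21 / 64 - 7 / (4 * n)) (3 * n / 4 + 21 / 64),
      gE n c = 0 := by
  have hn0 : (0:ℝ) < n := by linarith
  have hm : (0:ℝ) ≤ n - 3 := by linarith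
  have h1 : gE n (3 * n / 4 + 21 / 64) > 0 := by
    unfold gE
    nlinarith [mul_nonneg hm hm, mul_nonneg (mul_nonneg hm hm) hm, hn0]
  have h2 : gE n (3 * n / 4 + 21 / 64 - 7 / (4 * n)) < 0 := by
    unfold gE
    have h4n : (4:ℝ) * n ≠ 0 := by positivity
    have key : (3 * (3 * n / 4 + 21 / 64 - 7 / (4 * n)) ^ 4
        + (4 * n ^ 2 - 4 * n - 6) * (3 * n / 4 + 21 / 64 - 7 / (4 * n)) ^ 3
        + (-3 * n ^ 3 + 3 * n - 1) * (3 * n / 4 + 21 / 64 - 7 / (4 * n)) ^ 2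
        + 3 * n ^ 3 - 3 * n ^ 2) * n ^ 4 < 0 := by
      have e : (3 * (3 * n / 4 + 21 / 64 - 7 / (4 * n)) ^ 4
          + (4 * n ^ 2 - 4 * n - 6) * (3 * n / 4 + 21 / 64 - 7 / (4 * n)) ^ 3
          + (-3 * n ^ 3 + 3 * n - 1) * (3 * n / 4 + 21 / 64 - 7 / (4 * n)) ^ 2
          + 3 * n ^ 3 - 3 * n ^ 2) * n ^ 4
          = -(3459/2048) * n ^ 7 - (595281/65536) * n ^ 6 + (6086913/262144) * n ^ 5
            + (454266771/16777216) * n ^ 4 - (9102289/262144) * n ^ 3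
            - (1376655/32768) * n ^ 2 + (11319/1024) * n + 7203/256 := by
        field_simp
        ring
      rw [e]
      nlinarith [mul_nonneg hm hm, mul_nonneg (mul_nonneg hm hm) hm,
        mul_nonneg (mul_nonneg (mul_nonneg hm hm) hm) hm,
        mul_nonneg (mul_nonneg (mul_nonneg (mul_nonneg hm hm) hm) hm) hm,
        mul_nonneg (mul_nonneg (mul_nonneg (mul_nonneg (mul_nonneg hm hm) hm) hm) hm) hm,
        mul_nonneg (mul_nonneg (mul_nonneg (mul_nonneg (mul_nonneg (mul_nonneg hm hm) hm) hm) hm) hm) hm]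
    have hn4 : (0:ℝ) < n ^ 4 := by positivity
    nlinarith [key, hn4]
  refine ⟨h1, h2, ?_⟩
  have hab : 3 * n / 4 + 21 / 64 - 7 / (4 * n) ≤ 3 * n / 4 + 21 / 64 := by
    have : (0:ℝ) < 7 / (4 * n) := by positivity
    linarith
  have hcont : ContinuousOn (gE n)
      (Set.Icc (3 * n / 4 + 21 / 64 - 7 / (4 * n)) (3 * n / 4 + 21 / 64)) := by
    apply Continuous.continuousOn
    unfold gE
    continuity
  have := intermediate_value_Ioo hab hcont
  have h0 : (0:ℝ) ∈ Set.Ioo (gE n (3 * n / 4 + 21 / 64 - 7 / (4 * n)))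
      (gE n (3 * n / 4 + 21 / 64)) := ⟨h2, h1⟩
  obtain ⟨c, hc, hceq⟩ := this h0
  exact ⟨c, hc, hceq⟩
end

section
/- Let c ≥ 3 and n ≥ c, and let B be the c×c matrix with B_{jk} = (n−1)(j−k)² + c|j−k|. Among all nonnegative integer vectors m = (n_1,…,n_c) with each n_j ≥ 1 and Σ n_j = n, the quadratic form m^T B m is maximized only by vectors of the form m = 1 + ℓ·e_1 + (n−ℓ−c)·e_c with ℓ ∈ {⌊(n−c)/2⌋, ⌈(n−c)/2⌉}; moreover for m = 1 + ℓe_1 + (n−ℓ−c)e_c, m^T B m = (n+1)c²(c²−1)/6 + 2(n−c)(−nc² + (c(c+1)/6)((2n+1)c+n−1)) + 2ℓ(n−ℓ−c)((n−1)(c−1)² + c(c−1)). -/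
/-- The quadratic form `m ↦ mᵀ B m` where `B_{jk} = (n-1)(j-k)² + c|j-k|`
(indices `0,…,c-1`, which gives the same differences as `1,…,c`). -/
def quadFormB (n c : ℕ) (m : Fin c → ℕ) : ℚ :=
  ∑ j : Fin c, ∑ k : Fin c,
    (((n : ℚ) - 1) * (((j : ℕ) : ℚ) - ((k : ℕ) : ℚ)) ^ 2
        + (c : ℚ) * |((j : ℕ) : ℚ) - ((k : ℕ) : ℚ)|) * (m j : ℚ) * (m k : ℚ)

/-- The vector `1 + ℓ·e₁ + (n-ℓ-c)·e_c`. -/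
def extremeVec (n c ℓ : ℕ) : Fin c → ℕ :=
  fun j => 1 + (if (j : ℕ) = 0 then ℓ else 0) + (if (j : ℕ) = c - 1 then n - ℓ - c else 0)

namespace QFB

def fB (n c j k : ℕ) : ℚ := ((n:ℚ)-1)*((j:ℚ)-(k:ℚ))^2 + (c:ℚ)*|(j:ℚ)-(k:ℚ)|

def Bf (n c : ℕ) (v w : Fin c → ℚ) : ℚ :=
  ∑ j : Fin c, ∑ k : Fin c, fB n c (j : ℕ) (k : ℕ) * v j * w k

lemma quadFormB_eq (n c : ℕ) (m : Fin c → ℕ) :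
    quadFormB n c m = Bf n c (fun j => (m j : ℚ)) (fun j => (m j : ℚ)) := rfl

lemma fB_symm (n c j k : ℕ) : fB n c j k = fB n c k j := by
  unfold fB; rw [abs_sub_comm]; ring

lemma fB_self (n c j : ℕ) : fB n c j j = 0 := by simp [fB]

lemma Bf_symm (n c : ℕ) (v w : Fin c → ℚ) : Bf n c v w = Bf n c w v := by
  unfold Bf; rw [Finset.sum_comm]
  exact Finset.sum_congr rfl fun j _ => Finset.sum_congr rfl fun k _ => by
    rw [fB_symm]; ring

lemma Bf_add_left (n c : ℕ) (v w u : Fin c → ℚ) :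
    Bf n c (fun b => v b + w b) u = Bf n c v u + Bf n c w u := by
  unfold Bf; rw [← Finset.sum_add_distrib]
  exact Finset.sum_congr rfl fun j _ => by
    rw [← Finset.sum_add_distrib]
    exact Finset.sum_congr rfl fun k _ => by ring

lemma Bf_add_right (n c : ℕ) (v w u : Fin c → ℚ) :
    Bf n c u (fun b => v b + w b) = Bf n c u v + Bf n c u w := by
  rw [Bf_symm, Bf_add_left, Bf_symm n c u v, Bf_symm n c w u]

lemma Bf_smul_right (n c : ℕ) (x : ℚ) (v w : Fin c → ℚ) :
    Bf n c v (fun b => x * w b) = x * Bf n c v w := by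
  unfold Bf; rw [Finset.mul_sum]
  exact Finset.sum_congr rfl fun j _ => by
    rw [Finset.mul_sum]; exact Finset.sum_congr rfl fun k _ => by ring

lemma Bf_smul_left (n c : ℕ) (x : ℚ) (v w : Fin c → ℚ) :
    Bf n c (fun b => x * v b) w = x * Bf n c v w := by
  rw [Bf_symm, Bf_smul_right, Bf_symm]

def e {c : ℕ} (i : Fin c) : Fin c → ℚ := fun b => if b = i then 1 else 0

lemma Bf_e_right (n c : ℕ) (v : Fin c → ℚ) (i : Fin c) :
    Bf n c v (e i) = ∑ j : Fin c, fB n c (j:ℕ) (i:ℕ) * v j := by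
  unfold Bf e
  refine Finset.sum_congr rfl fun j _ => ?_
  rw [Finset.sum_eq_single i]
  · simp
  · intro k _ hk; simp [hk]
  · simp

lemma Bf_e_left (n c : ℕ) (w : Fin c → ℚ) (i : Fin c) :
    Bf n c (e i) w = ∑ k : Fin c, fB n c (i:ℕ) (k:ℕ) * w k := by
  rw [Bf_symm, Bf_e_right]
  exact Finset.sum_congr rfl fun k _ => by rw [fB_symm]

lemma Bf_e_e (n c : ℕ) (i j : Fin c) : Bf n c (e i) (e j) = fB n c (i:ℕ) (j:ℕ) := by
  rw [Bf_e_left]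
  unfold e
  rw [Finset.sum_eq_single j] <;> simp_all

lemma poly_sum (a b d : ℚ) (c : ℕ) :
    ∑ j ∈ Finset.range c, (a*(j:ℚ)^2 + b*(j:ℚ) + d)
      = a*((c:ℚ)*((c:ℚ)-1)*(2*(c:ℚ)-1)/6) + b*((c:ℚ)*((c:ℚ)-1)/2) + (c:ℚ)*d := by
  induction c with
  | zero => simp
  | succ c ih => rw [Finset.sum_range_succ, ih]; push_cast; ring

lemma sabs_le (a c : ℕ) (h : c ≤ a) :
    ∑ j ∈ Finset.range c, |(j:ℚ) - (a:ℚ)| = (c:ℚ)*(a:ℚ) - (c:ℚ)*((c:ℚ)-1)/2 := by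
  have h1 : ∀ j ∈ Finset.range c, |(j:ℚ) - (a:ℚ)| = 0*(j:ℚ)^2 + (-1)*(j:ℚ) + (a:ℚ) := by
    intro j hj
    have hj' : j < c := Finset.mem_range.mp hj
    have : (j:ℚ) ≤ (a:ℚ) := by exact_mod_cast (le_of_lt (lt_of_lt_of_le hj' h))
    rw [abs_sub_comm, abs_of_nonneg (by linarith)]; ring
  rw [Finset.sum_congr rfl h1, poly_sum]; ring

lemma sabs2 (c : ℕ) :
    ∑ j ∈ Finset.range c, ∑ k ∈ Finset.range c, |(j:ℚ) - (k:ℚ)|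
      = (c:ℚ)*((c:ℚ)^2-1)/3 := by
  induction c with
  | zero => simp
  | succ c ih =>
    rw [Finset.sum_range_succ]
    have e1 : ∑ j ∈ Finset.range c, ∑ k ∈ Finset.range (c+1), |(j:ℚ)-(k:ℚ)|
        = (∑ j ∈ Finset.range c, ∑ k ∈ Finset.range c, |(j:ℚ)-(k:ℚ)|)
          + ∑ j ∈ Finset.range c, |(j:ℚ)-(c:ℚ)| := by
      rw [← Finset.sum_add_distrib]
      exact Finset.sum_congr rfl fun j _ => by
        have := Finset.sum_range_succ (fun k : ℕ => |(j:ℚ)-(k:ℚ)|) c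
        exact_mod_cast this
    have e2 : ∑ k ∈ Finset.range (c+1), |((c:ℕ):ℚ)-(k:ℚ)|
        = (∑ k ∈ Finset.range c, |(k:ℚ)-(c:ℚ)|) + 0 := by
      rw [Finset.sum_range_succ]
      simp [abs_sub_comm]
    rw [e1, ih, e2, sabs_le c c le_rfl]
    push_cast; ring

lemma sq2 (c : ℕ) :
    ∑ j ∈ Finset.range c, ∑ k ∈ Finset.range c, ((j:ℚ)-(k:ℚ))^2
      = (c:ℚ)^2*((c:ℚ)^2-1)/6 := by
  have h1 : ∀ j ∈ Finset.range c, ∑ k ∈ Finset.range c, ((j:ℚ)-(k:ℚ))^2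
      = (c:ℚ)*(j:ℚ)^2 + (-((c:ℚ)*((c:ℚ)-1)))*(j:ℚ) + ((c:ℚ)*((c:ℚ)-1)*(2*(c:ℚ)-1)/6) := by
    intro j _
    have h2 : ∀ k ∈ Finset.range c, ((j:ℚ)-(k:ℚ))^2
        = 1*(k:ℚ)^2 + (-2*(j:ℚ))*(k:ℚ) + (j:ℚ)^2 := fun k _ => by ring
    rw [Finset.sum_congr rfl h2, poly_sum]; ring
  rw [Finset.sum_congr rfl h1, poly_sum]; ring

lemma Q1val (n c : ℕ) :
    ∑ j ∈ Finset.range c, ∑ k ∈ Finset.range c, fB n c j k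
      = ((n:ℚ)+1)*(c:ℚ)^2*((c:ℚ)^2-1)/6 := by
  have h1 : ∀ j ∈ Finset.range c, ∑ k ∈ Finset.range c, fB n c j k
      = ((n:ℚ)-1) * (∑ k ∈ Finset.range c, ((j:ℚ)-(k:ℚ))^2)
        + (c:ℚ) * (∑ k ∈ Finset.range c, |(j:ℚ)-(k:ℚ)|) := by
    intro j _
    rw [Finset.mul_sum, Finset.mul_sum, ← Finset.sum_add_distrib]
    exact Finset.sum_congr rfl fun k _ => rfl
  rw [Finset.sum_congr rfl h1, Finset.sum_add_distrib, ← Finset.mul_sum, ← Finset.mul_sum,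
    sq2, sabs2]
  ring

lemma R0val (n c : ℕ) :
    ∑ j : Fin c, fB n c (j:ℕ) 0
      = ((n:ℚ)-1)*((c:ℚ)*((c:ℚ)-1)*(2*(c:ℚ)-1)/6) + (c:ℚ)*((c:ℚ)*((c:ℚ)-1)/2) := by
  rw [Fin.sum_univ_eq_sum_range (fun j : ℕ => fB n c j 0) c]
  have h1 : ∀ j ∈ Finset.range c, fB n c j 0
      = ((n:ℚ)-1)*(j:ℚ)^2 + (c:ℚ)*(j:ℚ) + 0 := by
    intro j _; unfold fB
    rw [Nat.cast_zero, sub_zero, abs_of_nonneg (Nat.cast_nonneg j)]; ring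
  rw [Finset.sum_congr rfl h1, poly_sum]; ring

lemma RLval (n c : ℕ) (hc : 1 ≤ c) :
    ∑ j : Fin c, fB n c (j:ℕ) (c-1)
      = ((n:ℚ)-1)*((c:ℚ)*((c:ℚ)-1)*(2*(c:ℚ)-1)/6) + (c:ℚ)*((c:ℚ)*((c:ℚ)-1)/2) := by
  rw [Fin.sum_univ_eq_sum_range (fun j : ℕ => fB n c j (c-1)) c]
  have hx : ((c-1:ℕ):ℚ) = (c:ℚ)-1 := by
    rw [Nat.cast_sub hc]; norm_num
  have h1 : ∀ j ∈ Finset.range c, fB n c j (c-1)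
      = ((n:ℚ)-1)*(j:ℚ)^2 + (-2*((n:ℚ)-1)*((c:ℚ)-1) - (c:ℚ))*(j:ℚ)
        + (((n:ℚ)-1)*((c:ℚ)-1)^2 + (c:ℚ)*((c:ℚ)-1)) := by
    intro j hj
    have hj' : j < c := Finset.mem_range.mp hj
    have hj2 : (j:ℚ) ≤ (c:ℚ)-1 := by
      have : (j:ℕ) + 1 ≤ c := hj'
      have := (Nat.cast_le (α := ℚ)).mpr this
      push_cast at this; linarith
    unfold fB
    rw [hx, abs_sub_comm, abs_of_nonneg (by linarith)]; ring
  rw [Finset.sum_congr rfl h1, poly_sum]; ring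

lemma Fval (n c : ℕ) (hc : 1 ≤ c) :
    fB n c 0 (c-1) = ((n:ℚ)-1)*((c:ℚ)-1)^2 + (c:ℚ)*((c:ℚ)-1) := by
  have hx : ((c-1:ℕ):ℚ) = (c:ℚ)-1 := by rw [Nat.cast_sub hc]; norm_num
  have hge : (0:ℚ) ≤ (c:ℚ)-1 := by
    have := (Nat.cast_le (α := ℚ)).mpr hc; push_cast at this; linarith
  unfold fB
  rw [hx, Nat.cast_zero, abs_sub_comm, sub_zero, abs_of_nonneg hge]; ring

end QFB

namespace QFB

lemma sum_mul_F {c : ℕ} (x y : ℚ) (i0 iL : Fin c) (φ : Fin c → ℚ) :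
    ∑ j : Fin c, (1 + (x * e i0 j + y * e iL j)) * φ j
      = (∑ j : Fin c, φ j) + x * φ i0 + y * φ iL := by
  have h1 : ∀ j ∈ Finset.univ, (1 + (x * e i0 j + y * e iL j)) * φ j
      = φ j + (x * (if j = i0 then φ j else 0) + y * (if j = iL then φ j else 0)) := by
    intro j _
    unfold e
    split_ifs <;> ring
  rw [Finset.sum_congr rfl h1, Finset.sum_add_distrib, Finset.sum_add_distrib,
    ← Finset.mul_sum, ← Finset.mul_sum, Finset.sum_ite_eq' Finset.univ i0 φ,
    Finset.sum_ite_eq' Finset.univ iL φ]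
  simp [add_assoc]

lemma Bf_one_plus (n c : ℕ) (x y : ℚ) (i0 iL : Fin c) :
    Bf n c (fun b => 1 + (x * e i0 b + y * e iL b)) (fun b => 1 + (x * e i0 b + y * e iL b))
      = (∑ j : Fin c, ∑ k : Fin c, fB n c (j:ℕ) (k:ℕ))
        + 2*x*(∑ j : Fin c, fB n c (j:ℕ) (i0:ℕ))
        + 2*y*(∑ j : Fin c, fB n c (j:ℕ) (iL:ℕ))
        + 2*(x*y)*fB n c (i0:ℕ) (iL:ℕ) := by
  have hcol0 : ∑ k : Fin c, fB n c (i0:ℕ) (k:ℕ) = ∑ j : Fin c, fB n c (j:ℕ) (i0:ℕ) :=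
    Finset.sum_congr rfl fun k _ => fB_symm n c _ _
  have hcolL : ∑ k : Fin c, fB n c (iL:ℕ) (k:ℕ) = ∑ j : Fin c, fB n c (j:ℕ) (iL:ℕ) :=
    Finset.sum_congr rfl fun k _ => fB_symm n c _ _
  simp only [Bf]
  have inner : ∀ j : Fin c,
      ∑ k : Fin c, fB n c (j:ℕ) (k:ℕ) * (1 + (x * e i0 j + y * e iL j))
          * (1 + (x * e i0 k + y * e iL k))
        = (1 + (x * e i0 j + y * e iL j))
            * ((∑ k : Fin c, fB n c (j:ℕ) (k:ℕ)) + x * fB n c (j:ℕ) (i0:ℕ)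
                + y * fB n c (j:ℕ) (iL:ℕ)) := by
    intro j
    rw [← sum_mul_F x y i0 iL (fun k => fB n c (j:ℕ) (k:ℕ)), Finset.mul_sum]
    exact Finset.sum_congr rfl fun k _ => by ring
  rw [Finset.sum_congr rfl fun j _ => inner j,
    sum_mul_F x y i0 iL
      (fun j => (∑ k : Fin c, fB n c (j:ℕ) (k:ℕ)) + x * fB n c (j:ℕ) (i0:ℕ)
          + y * fB n c (j:ℕ) (iL:ℕ))]
  rw [Finset.sum_add_distrib, Finset.sum_add_distrib, ← Finset.mul_sum, ← Finset.mul_sum]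
  rw [hcol0, hcolL, fB_self n c (i0:ℕ), fB_self n c (iL:ℕ), fB_symm n c (iL:ℕ) (i0:ℕ)]
  ring

lemma Q1fin (n c : ℕ) :
    ∑ j : Fin c, ∑ k : Fin c, fB n c (j:ℕ) (k:ℕ) = ((n:ℚ)+1)*(c:ℚ)^2*((c:ℚ)^2-1)/6 := by
  have h1 : ∀ j : ℕ, ∑ k : Fin c, fB n c j (k:ℕ) = ∑ k ∈ Finset.range c, fB n c j k :=
    fun j => Fin.sum_univ_eq_sum_range (fun k : ℕ => fB n c j k) c
  calc ∑ j : Fin c, ∑ k : Fin c, fB n c (j:ℕ) (k:ℕ)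
      = ∑ j ∈ Finset.range c, ∑ k : Fin c, fB n c j (k:ℕ) :=
        Fin.sum_univ_eq_sum_range (fun j : ℕ => ∑ k : Fin c, fB n c j (k:ℕ)) c
    _ = ∑ j ∈ Finset.range c, ∑ k ∈ Finset.range c, fB n c j k :=
        Finset.sum_congr rfl fun j _ => h1 j
    _ = ((n:ℚ)+1)*(c:ℚ)^2*((c:ℚ)^2-1)/6 := Q1val n c

lemma formula (n c ℓ : ℕ) (hc : 3 ≤ c) (hcn : c ≤ n) (hℓ : ℓ ≤ n - c) :
    quadFormB n c (extremeVec n c ℓ)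
      = ((n : ℚ) + 1) * (c : ℚ) ^ 2 * ((c : ℚ) ^ 2 - 1) / 6
        + 2 * ((n : ℚ) - (c : ℚ)) * (-(n : ℚ) * (c : ℚ) ^ 2
            + ((c : ℚ) * ((c : ℚ) + 1) / 6) * ((2 * (n : ℚ) + 1) * (c : ℚ) + (n : ℚ) - 1))
        + 2 * (ℓ : ℚ) * ((n : ℚ) - (ℓ : ℚ) - (c : ℚ))
            * (((n : ℚ) - 1) * ((c : ℚ) - 1) ^ 2 + (c : ℚ) * ((c : ℚ) - 1)) := by
  have h0 : 0 < c := by omega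
  have hL : c - 1 < c := by omega
  set i0 : Fin c := ⟨0, h0⟩ with hi0
  set iL : Fin c := ⟨c-1, hL⟩ with hiL
  have hℓc : ℓ + c ≤ n := by omega
  have hcast : ((n - ℓ - c : ℕ) : ℚ) = (n:ℚ) - (ℓ:ℚ) - (c:ℚ) := by
    rw [Nat.sub_sub, Nat.cast_sub (by omega), Nat.cast_add]; ring
  have hvec : (fun j : Fin c => ((extremeVec n c ℓ j : ℕ) : ℚ))
      = fun b => 1 + ((ℓ:ℚ) * e i0 b + ((n:ℚ)-(ℓ:ℚ)-(c:ℚ)) * e iL b) := by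
    funext b
    unfold extremeVec e
    have hb0 : (b = i0) ↔ ((b:ℕ) = 0) := by rw [Fin.ext_iff]
    have hbL : (b = iL) ↔ ((b:ℕ) = c - 1) := by rw [Fin.ext_iff]
    by_cases h1 : (b:ℕ) = 0
    · have h2 : ¬ ((b:ℕ) = c - 1) := by omega
      rw [if_pos h1, if_neg h2, if_pos (hb0.mpr h1), if_neg (fun h => h2 (hbL.mp h))]
      push_cast; ring
    · by_cases h2 : (b:ℕ) = c - 1
      · rw [if_neg h1, if_pos h2, if_neg (fun h => h1 (hb0.mp h)), if_pos (hbL.mpr h2)]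
        rw [add_zero, Nat.cast_add, Nat.cast_one, hcast]; ring
      · rw [if_neg h1, if_neg h2, if_neg (fun h => h1 (hb0.mp h)),
          if_neg (fun h => h2 (hbL.mp h))]
        push_cast; ring
  rw [quadFormB_eq, hvec, Bf_one_plus, Q1fin]
  have hv0 : ((i0 : Fin c) : ℕ) = 0 := rfl
  have hvL : ((iL : Fin c) : ℕ) = c - 1 := rfl
  rw [hv0, hvL, R0val, RLval n c (by omega), Fval n c (by omega)]
  ring

end QFB

namespace QFB

def move {c : ℕ} (m : Fin c → ℕ) (j i : Fin c) : Fin c → ℕ :=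
  fun b => if b = j then m b - 1 else if b = i then m b + 1 else m b

def rowSum (n c : ℕ) (w : Fin c → ℚ) (a : ℕ) : ℚ := ∑ k : Fin c, fB n c a (k:ℕ) * w k

lemma sum_mul_pert {c : ℕ} (v : Fin c → ℚ) (i j : Fin c) (φ : Fin c → ℚ) :
    ∑ b : Fin c, (v b + (e i b - e j b)) * φ b
      = (∑ b : Fin c, v b * φ b) + φ i - φ j := by
  have h1 : ∀ b ∈ Finset.univ, (v b + (e i b - e j b)) * φ b
      = v b * φ b + ((if b = i then φ b else 0) - (if b = j then φ b else 0)) := by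
    intro b _; unfold e; split_ifs <;> ring
  rw [Finset.sum_congr rfl h1, Finset.sum_add_distrib, Finset.sum_sub_distrib,
    Finset.sum_ite_eq' Finset.univ i φ, Finset.sum_ite_eq' Finset.univ j φ]
  simp [add_sub_assoc]

lemma Bf_pert (n c : ℕ) (v : Fin c → ℚ) (i j : Fin c) :
    Bf n c (fun b => v b + (e i b - e j b)) (fun b => v b + (e i b - e j b))
      = Bf n c v v
        + 2 * ((∑ k : Fin c, fB n c (i:ℕ) (k:ℕ) * v k)
            - (∑ k : Fin c, fB n c (j:ℕ) (k:ℕ) * v k))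
        - 2 * fB n c (i:ℕ) (j:ℕ) := by
  simp only [Bf]
  have inner : ∀ b : Fin c,
      ∑ k : Fin c, fB n c (b:ℕ) (k:ℕ) * (v b + (e i b - e j b)) * (v k + (e i k - e j k))
        = (v b + (e i b - e j b))
            * ((∑ k : Fin c, fB n c (b:ℕ) (k:ℕ) * v k) + fB n c (b:ℕ) (i:ℕ)
                - fB n c (b:ℕ) (j:ℕ)) := by
    intro b
    have h2 : ∑ k : Fin c, v k * fB n c (b:ℕ) (k:ℕ) = ∑ k : Fin c, fB n c (b:ℕ) (k:ℕ) * v k :=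
      Finset.sum_congr rfl fun k _ => by ring
    rw [← h2, ← sum_mul_pert v i j (fun k => fB n c (b:ℕ) (k:ℕ)), Finset.mul_sum]
    exact Finset.sum_congr rfl fun k _ => by ring
  rw [Finset.sum_congr rfl fun b _ => inner b,
    sum_mul_pert v i j
      (fun b => (∑ k : Fin c, fB n c (b:ℕ) (k:ℕ) * v k) + fB n c (b:ℕ) (i:ℕ)
          - fB n c (b:ℕ) (j:ℕ))]
  have hsplit : ∑ b : Fin c,
      v b * ((∑ k : Fin c, fB n c (b:ℕ) (k:ℕ) * v k) + fB n c (b:ℕ) (i:ℕ)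
          - fB n c (b:ℕ) (j:ℕ))
      = (∑ b : Fin c, ∑ k : Fin c, fB n c (b:ℕ) (k:ℕ) * v b * v k)
        + (∑ k : Fin c, fB n c (i:ℕ) (k:ℕ) * v k)
        - (∑ k : Fin c, fB n c (j:ℕ) (k:ℕ) * v k) := by
    have h3 : ∀ b ∈ Finset.univ, v b * ((∑ k : Fin c, fB n c (b:ℕ) (k:ℕ) * v k)
          + fB n c (b:ℕ) (i:ℕ) - fB n c (b:ℕ) (j:ℕ))
        = (∑ k : Fin c, fB n c (b:ℕ) (k:ℕ) * v b * v k)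
          + (fB n c (i:ℕ) (b:ℕ) * v b - fB n c (j:ℕ) (b:ℕ) * v b) := by
      intro b _
      have hS : ∑ k : Fin c, v b * (fB n c (b:ℕ) (k:ℕ) * v k)
          = ∑ k : Fin c, fB n c (b:ℕ) (k:ℕ) * v b * v k :=
        Finset.sum_congr rfl fun k _ => by ring
      rw [mul_sub, mul_add, Finset.mul_sum, hS, fB_symm n c (i:ℕ) (b:ℕ),
        fB_symm n c (j:ℕ) (b:ℕ)]
      ring
    rw [Finset.sum_congr rfl h3, Finset.sum_add_distrib, Finset.sum_sub_distrib]
    ring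
  rw [hsplit, fB_self n c (j:ℕ), fB_self n c (i:ℕ), fB_symm n c (j:ℕ) (i:ℕ)]
  ring

lemma move_cast {c : ℕ} (m : Fin c → ℕ) (j i : Fin c) (hij : i ≠ j) (hmj : 1 ≤ m j) :
    (fun b => ((move m j i b : ℕ) : ℚ)) = fun b => (m b : ℚ) + (e i b - e j b) := by
  funext b
  unfold move e
  by_cases h1 : b = j
  · subst h1
    rw [if_pos rfl, if_neg (fun h => hij h.symm), if_pos rfl, Nat.cast_sub hmj]
    push_cast; ring
  · by_cases h2 : b = i
    · subst h2; rw [if_neg h1, if_pos rfl, if_pos rfl, if_neg h1]; push_cast; ring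
    · rw [if_neg h1, if_neg h2, if_neg h2, if_neg h1]; ring

lemma sum_e {c : ℕ} (i : Fin c) : ∑ b : Fin c, e i b = 1 := by
  unfold e
  rw [Finset.sum_ite_eq' Finset.univ i (fun _ => (1:ℚ))]
  simp

lemma move_sum {c n : ℕ} (m : Fin c → ℕ) (j i : Fin c) (hij : i ≠ j) (hmj : 1 ≤ m j)
    (h : ∑ b, m b = n) : ∑ b, move m j i b = n := by
  have hq : ((∑ b, move m j i b : ℕ) : ℚ) = ((n : ℕ) : ℚ) := by
    push_cast
    have := congrFun (move_cast m j i hij hmj)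
    rw [Finset.sum_congr rfl fun b _ => this b, Finset.sum_add_distrib,
      Finset.sum_sub_distrib, sum_e, sum_e]
    have : ∑ b, ((m b : ℕ) : ℚ) = ((n:ℕ) : ℚ) := by exact_mod_cast congrArg (Nat.cast (R := ℚ)) h
    rw [this]; ring
  exact_mod_cast hq

lemma move_pos {c : ℕ} (m : Fin c → ℕ) (j i : Fin c) (hall : ∀ b, 1 ≤ m b)
    (hmj : 2 ≤ m j) : ∀ b, 1 ≤ move m j i b := by
  intro b; unfold move
  split_ifs with h1 h2
  · subst h1; omega
  · have := hall b; omega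
  · exact hall b

lemma quad_move (n c : ℕ) (m : Fin c → ℕ) (i j : Fin c) (hij : i ≠ j) (hmj : 1 ≤ m j) :
    quadFormB n c (move m j i)
      = quadFormB n c m
        + 2 * (rowSum n c (fun k => (m k : ℚ) - e j k) (i:ℕ)
            - rowSum n c (fun k => (m k : ℚ) - e j k) (j:ℕ)) := by
  have hrow : ∀ a : ℕ, rowSum n c (fun k => (m k : ℚ) - e j k) a
      = (∑ k : Fin c, fB n c a (k:ℕ) * (m k : ℚ)) - fB n c a (j:ℕ) := by
    intro a
    unfold rowSum
    have h1 : ∀ k : Fin c, k ∈ Finset.univ → fB n c a (k:ℕ) * ((m k : ℚ) - e j k)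
        = fB n c a (k:ℕ) * (m k : ℚ) - (if k = j then fB n c a (k:ℕ) else 0) := by
      intro k _; unfold e; split_ifs <;> ring
    rw [Finset.sum_congr rfl h1, Finset.sum_sub_distrib,
      Finset.sum_ite_eq' Finset.univ j (fun k => fB n c a (k:ℕ))]
    simp
  rw [quadFormB_eq, quadFormB_eq, move_cast m j i hij hmj, Bf_pert, hrow, hrow, fB_self]
  ring

lemma rowSum_convex (n c : ℕ) (hn : 2 ≤ n) (w : Fin c → ℚ) (hw : ∀ k, 0 ≤ w k)
    (hs : 1 ≤ ∑ k, w k) (a : ℕ) (ha : 1 ≤ a) :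
    2 * rowSum n c w a < rowSum n c w (a-1) + rowSum n c w (a+1) := by
  have hn' : (2:ℚ) ≤ (n:ℚ) := by exact_mod_cast hn
  have key : ∀ k : ℕ, 2*((n:ℚ)-1) + 2 * fB n c a k ≤ fB n c (a-1) k + fB n c (a+1) k := by
    intro k
    unfold fB
    have hc1 : ((a-1:ℕ):ℚ) = (a:ℚ) - 1 := by rw [Nat.cast_sub ha]; norm_num
    have hc2 : ((a+1:ℕ):ℚ) = (a:ℚ) + 1 := by push_cast; ring
    rw [hc1, hc2]
    set t := (a:ℚ) - (k:ℚ) with ht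
    have habs : 2*|t| ≤ |t-1| + |t+1| := by
      have h1 : |(t-1) + (t+1)| ≤ |t-1| + |t+1| := abs_add_le _ _
      have h2 : |(t-1) + (t+1)| = 2*|t| := by
        rw [show (t-1) + (t+1) = 2*t by ring, abs_mul]
        norm_num
      linarith
    have hcnn : (0:ℚ) ≤ (c:ℚ) := Nat.cast_nonneg c
    have hprod := mul_le_mul_of_nonneg_left habs hcnn
    have hq : ((n:ℚ)-1)*((a:ℚ)-1-(k:ℚ))^2 + ((n:ℚ)-1)*((a:ℚ)+1-(k:ℚ))^2
        = 2*(((n:ℚ)-1)*((a:ℚ)-(k:ℚ))^2) + 2*((n:ℚ)-1) := by ring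
    have e1 : (a:ℚ)-1-(k:ℚ) = t - 1 := by rw [ht]; ring
    have e2 : (a:ℚ)+1-(k:ℚ) = t + 1 := by rw [ht]; ring
    rw [e1, e2]
    nlinarith [hprod, hq]
  have h1 : ∑ k : Fin c, (2*((n:ℚ)-1) * w k + 2*(fB n c a (k:ℕ) * w k))
      ≤ ∑ k : Fin c, (fB n c (a-1) (k:ℕ) * w k + fB n c (a+1) (k:ℕ) * w k) := by
    refine Finset.sum_le_sum fun k _ => ?_
    have hpt := mul_le_mul_of_nonneg_right (key (k:ℕ)) (hw k)
    nlinarith [hpt]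
  rw [Finset.sum_add_distrib, Finset.sum_add_distrib, ← Finset.mul_sum,
    ← Finset.mul_sum] at h1
  unfold rowSum
  have h2 : 2*((n:ℚ)-1) * 1 ≤ 2*((n:ℚ)-1) * ∑ k, w k :=
    mul_le_mul_of_nonneg_left hs (by linarith)
  linarith

end QFB

namespace QFB

lemma convex_max (G : ℕ → ℚ) (d : ℕ)
    (hconv : ∀ a, 1 ≤ a → a < d → 2 * G a < G (a-1) + G (a+1))
    (j : ℕ) (h0 : 0 < j) (hd : j < d) : G j < max (G 0) (G d) := by
  by_cases hcase : G j < G (j+1)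
  · have claim : ∀ t, j ≤ t → t < d → G t < G (t+1) ∧ G j < G (t+1) := by
      intro t ht
      induction t, ht using Nat.le_induction with
      | base => intro _; exact ⟨hcase, hcase⟩
      | succ t ht ih =>
        intro htd
        obtain ⟨h1, h2⟩ := ih (by omega)
        have hc : 2 * G (t+1) < G t + G (t+2) := by
          have := hconv (t+1) (by omega) htd
          simpa using this
        exact ⟨by linarith, by linarith⟩
    have h := (claim (d-1) (by omega) (by omega)).2
    have he : d - 1 + 1 = d := by omega
    rw [he] at h
    exact lt_max_of_lt_right h
  · push_neg at hcase
    have claim : ∀ t, 1 ≤ t → t ≤ j → G (j - t + 1) - G (j - t) < 0 ∧ G j < G (j - t) := by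
      intro t ht
      induction t, ht using Nat.le_induction with
      | base =>
        intro h1j
        have hc : 2 * G j < G (j-1) + G (j+1) := hconv j (by omega) hd
        have he : j - 1 + 1 = j := by omega
        rw [he]
        exact ⟨by linarith, by linarith⟩
      | succ t ht ih =>
        intro htj
        obtain ⟨h1, h2⟩ := ih (by omega)
        have hs1 : 1 ≤ j - t := by omega
        have hsd : j - t < d := by omega
        have hc : 2 * G (j-t) < G (j-t-1) + G (j-t+1) := hconv (j-t) hs1 hsd
        have he1 : j - (t+1) = j - t - 1 := by omega
        have he2 : j - t - 1 + 1 = j - t := by omega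
        rw [he1, he2]
        exact ⟨by linarith, by linarith⟩
    have h := (claim j (by omega) le_rfl).2
    rw [Nat.sub_self] at h
    exact lt_max_of_lt_left h

lemma exchange (n c : ℕ) (hn : 2 ≤ n) (m : Fin c → ℕ)
    (hall : ∀ b, 1 ≤ m b) (hsum : ∑ b, m b = n)
    (i0 iL : Fin c) (hi0 : (i0:ℕ) = 0) (hiL : (iL:ℕ) = c - 1)
    (j : Fin c) (hj0 : 0 < (j:ℕ)) (hjL : (j:ℕ) < c - 1) (hmj : 2 ≤ m j) :
    ∃ m' : Fin c → ℕ, (∀ b, 1 ≤ m' b) ∧ (∑ b, m' b = n) ∧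
      quadFormB n c m < quadFormB n c m' ∧ m' i0 + m' iL = m i0 + m iL + 1 := by
  have hwpos : ∀ k, 0 ≤ ((m k : ℚ) - e j k) := by
    intro k; unfold e; split_ifs with h
    · subst h
      have : (2:ℚ) ≤ (m k : ℚ) := by exact_mod_cast hmj
      linarith
    · simp
  have hwsum : 1 ≤ ∑ k, ((m k : ℚ) - e j k) := by
    rw [Finset.sum_sub_distrib, sum_e]
    have hs : ∑ k, ((m k : ℕ) : ℚ) = ((n:ℕ):ℚ) := by exact_mod_cast congrArg (Nat.cast (R := ℚ)) hsum
    rw [hs]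
    have : (2:ℚ) ≤ (n:ℚ) := by exact_mod_cast hn
    linarith
  have hconv : ∀ a, 1 ≤ a → a < c-1 →
      2 * rowSum n c (fun k => (m k : ℚ) - e j k) a
        < rowSum n c (fun k => (m k : ℚ) - e j k) (a-1)
          + rowSum n c (fun k => (m k : ℚ) - e j k) (a+1) :=
    fun a ha _ => rowSum_convex n c hn _ hwpos hwsum a ha
  have hmax := convex_max (rowSum n c (fun k => (m k : ℚ) - e j k)) (c-1) hconv (j:ℕ) hj0 hjL
  have hjne0 : (j:ℕ) ≠ 0 := by omega
  have hjneL : (j:ℕ) ≠ c - 1 := by omega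
  have hL2 : 2 ≤ c - 1 := by omega
  rcases le_or_gt (rowSum n c (fun k => (m k : ℚ) - e j k) (c-1))
      (rowSum n c (fun k => (m k : ℚ) - e j k) 0) with hcmp | hcmp
  · rw [max_eq_left hcmp] at hmax
    have hij : i0 ≠ j := fun h => hjne0 (by rw [← h, hi0])
    refine ⟨move m j i0, move_pos m j i0 hall hmj,
      move_sum m j i0 hij (by omega) hsum, ?_, ?_⟩
    · rw [quad_move n c m i0 j hij (by omega), hi0]
      linarith
    · have hiLj : iL ≠ j := fun h => hjneL (by rw [← h, hiL])
      have hiLi0 : iL ≠ i0 := fun h => by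
        have := congrArg (fun x : Fin c => (x:ℕ)) h
        simp only [hi0, hiL] at this
        omega
      have e1 : move m j i0 i0 = m i0 + 1 := by
        unfold move; rw [if_neg hij, if_pos rfl]
      have e2 : move m j i0 iL = m iL := by
        unfold move; rw [if_neg hiLj, if_neg hiLi0]
      omega
  · rw [max_eq_right (le_of_lt hcmp)] at hmax
    have hij : iL ≠ j := fun h => hjneL (by rw [← h, hiL])
    refine ⟨move m j iL, move_pos m j iL hall hmj,
      move_sum m j iL hij (by omega) hsum, ?_, ?_⟩
    · rw [quad_move n c m iL j hij (by omega), hiL]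
      linarith
    · have hi0j : i0 ≠ j := fun h => hjne0 (by rw [← h, hi0])
      have hi0iL : i0 ≠ iL := fun h => by
        have := congrArg (fun x : Fin c => (x:ℕ)) h
        simp only [hi0, hiL] at this
        omega
      have e1 : move m j iL iL = m iL + 1 := by
        unfold move; rw [if_neg hij, if_pos rfl]
      have e2 : move m j iL i0 = m i0 := by
        unfold move; rw [if_neg hi0j, if_neg hi0iL]
      omega

end QFB

namespace QFB

lemma int_quad_strict (q r l N : ℤ) (hN : N = 2*q + r) (hr0 : 0 ≤ r) (hr1 : r ≤ 1)
    (hl : l ≠ q) (hl2 : l ≠ q + r) : l*(N - l) + 1 ≤ q*(N - q) := by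
  rcases lt_or_gt_of_ne hl with h | h
  · have h1 : (1:ℤ) ≤ q - l := by omega
    have h2 : (1:ℤ) ≤ q - l + r := by omega
    have h3 : (1:ℤ)*(1:ℤ) ≤ (q-l)*((q-l)+r) := mul_le_mul h1 h2 (by norm_num) (by linarith)
    nlinarith [h3]
  · have h2 : (1:ℤ) ≤ l - q := by omega
    have h1 : (1:ℤ) ≤ l - q - r := by omega
    have h3 : (1:ℤ)*(1:ℤ) ≤ (l-q)*(l-q-r) := mul_le_mul h2 h1 (by norm_num) (by linarith)
    nlinarith [h3]

lemma nat_quad (N l : ℕ) (h : l ≤ N) : l * (N - l) ≤ N/2 * (N - N/2) := by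
  obtain ⟨k, r, hk, hr, hN2⟩ : ∃ k r, N/2 = k ∧ N%2 = r ∧ N = 2*k + r :=
    ⟨N/2, N%2, rfl, rfl, (Nat.div_add_mod N 2).symm ▸ by omega⟩
  rw [hk]
  have hkN : k ≤ N := by omega
  have hr1 : r ≤ 1 := by omega
  by_cases hl : l = k
  · rw [hl]
  · by_cases hl2 : l = k + r
    · rw [hl2]
      zify [show k + r ≤ N by omega, hkN]
      nlinarith [show (N:ℤ) = 2*k + r by exact_mod_cast hN2]
    · have hs := int_quad_strict (k:ℤ) (r:ℤ) (l:ℤ) (N:ℤ)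
        (by exact_mod_cast hN2) (by positivity) (by exact_mod_cast hr1)
        (by exact_mod_cast hl) (by exact_mod_cast (hl2 ∘ fun hh => by exact_mod_cast hh))
      zify [h, hkN]
      linarith

lemma nat_quad_eq (N l : ℕ) (h : l ≤ N) (hge : N/2 * (N - N/2) ≤ l * (N - l)) :
    l = N/2 ∨ l = (N+1)/2 := by
  obtain ⟨k, r, hk, hr, hN2⟩ : ∃ k r, N/2 = k ∧ N%2 = r ∧ N = 2*k + r :=
    ⟨N/2, N%2, rfl, rfl, (Nat.div_add_mod N 2).symm ▸ by omega⟩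
  rw [hk] at hge ⊢
  have hkN : k ≤ N := by omega
  have hr1 : r ≤ 1 := by omega
  have he : (N+1)/2 = k + r := by omega
  rw [he]
  by_contra hcon
  push_neg at hcon
  obtain ⟨h1, h2⟩ := hcon
  have hs := int_quad_strict (k:ℤ) (r:ℤ) (l:ℤ) (N:ℤ)
    (by exact_mod_cast hN2) (by positivity) (by exact_mod_cast hr1)
    (by exact_mod_cast h1) (by exact_mod_cast (h2 ∘ fun hh => by exact_mod_cast hh))
  have hge' : ((k * (N - k) : ℕ) : ℤ) ≤ ((l * (N - l) : ℕ) : ℤ) := by exact_mod_cast hge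
  push_cast [Nat.cast_sub h, Nat.cast_sub hkN] at hge'
  linarith

lemma all_one_extreme (n c : ℕ) (hc : 3 ≤ c) (hcn : c ≤ n)
    (m : Fin c → ℕ) (hall : ∀ j, 1 ≤ m j) (hsum : ∑ j, m j = n)
    (hint : ∀ j : Fin c, 0 < (j:ℕ) → (j:ℕ) < c - 1 → m j = 1) :
    ∃ ℓ, ℓ ≤ n - c ∧ m = extremeVec n c ℓ := by
  set i0 : Fin c := ⟨0, by omega⟩ with hi0
  set iL : Fin c := ⟨c-1, by omega⟩ with hiL
  have hvi0 : (i0:ℕ) = 0 := rfl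
  have hviL : (iL:ℕ) = c - 1 := rfl
  have hne : i0 ≠ iL := fun hh => by rw [hh] at hvi0; omega
  have hdecomp : ∀ b : Fin c, m b
      = 1 + (if b = i0 then m i0 - 1 else 0) + (if b = iL then m iL - 1 else 0) := by
    intro b
    by_cases h1 : b = i0
    · subst h1
      rw [if_pos rfl, if_neg hne]
      have := hall i0; omega
    · by_cases h2 : b = iL
      · subst h2
        rw [if_neg h1, if_pos rfl]
        have := hall iL; omega
      · have hv0 : (b:ℕ) ≠ 0 := fun hv => h1 (Fin.ext (by simpa [hi0] using hv))
        have hvL : (b:ℕ) ≠ c - 1 := fun hv => h2 (Fin.ext (by simpa [hiL] using hv))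
        rw [if_neg h1, if_neg h2, hint b (by omega) (by omega)]
  have hsum2 : n = c + ((m i0 - 1) + (m iL - 1)) := by
    calc n = ∑ b, m b := hsum.symm
      _ = ∑ b : Fin c, (1 + (if b = i0 then m i0 - 1 else 0)
            + (if b = iL then m iL - 1 else 0)) :=
          Finset.sum_congr rfl fun b _ => hdecomp b
      _ = c + ((m i0 - 1) + (m iL - 1)) := by
          rw [Finset.sum_add_distrib, Finset.sum_add_distrib, Finset.sum_const,
            Finset.sum_ite_eq' Finset.univ i0 (fun _ => m i0 - 1),
            Finset.sum_ite_eq' Finset.univ iL (fun _ => m iL - 1)]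
          simp [Finset.card_univ]
          omega
  have hm0 := hall i0
  have hmL := hall iL
  refine ⟨m i0 - 1, by omega, ?_⟩
  funext b
  unfold extremeVec
  by_cases h1 : b = i0
  · subst h1
    rw [if_pos hvi0, if_neg (by omega)]
    omega
  · by_cases h2 : b = iL
    · subst h2
      rw [if_neg (by omega), if_pos hviL]
      omega
    · have hv0 : (b:ℕ) ≠ 0 := fun hv => h1 (Fin.ext (by rw [hvi0]; exact hv))
      have hvL : (b:ℕ) ≠ c - 1 := fun hv => h2 (Fin.ext (by rw [hviL]; exact hv))
      rw [if_neg hv0, if_neg hvL, hint b (by omega) (by omega)]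

lemma extreme_compare (n c : ℕ) (hc : 3 ≤ c) (hn : 4 ≤ n) (hcn : c ≤ n) (a b : ℕ)
    (ha : a ≤ n - c) (hb : b ≤ n - c) (hab : a * ((n-c) - a) ≤ b * ((n-c) - b)) :
    quadFormB n c (extremeVec n c a) ≤ quadFormB n c (extremeVec n c b) := by
  rw [formula n c a hc hcn ha, formula n c b hc hcn hb]
  have hc' : (3:ℚ) ≤ (c:ℚ) := by exact_mod_cast hc
  have hn' : (4:ℚ) ≤ (n:ℚ) := by exact_mod_cast hn
  have hK : (0:ℚ) < ((n:ℚ)-1)*((c:ℚ)-1)^2 + (c:ℚ)*((c:ℚ)-1) := by nlinarith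
  have hcast : (a:ℚ) * ((n:ℚ) - (a:ℚ) - (c:ℚ)) ≤ (b:ℚ) * ((n:ℚ) - (b:ℚ) - (c:ℚ)) := by
    have h1 := (Nat.cast_le (α := ℚ)).mpr hab
    push_cast [Nat.cast_sub ha, Nat.cast_sub hb, Nat.cast_sub hcn] at h1
    nlinarith [h1]
  nlinarith [mul_le_mul_of_nonneg_right hcast (le_of_lt hK)]

lemma extreme_compare_rev (n c : ℕ) (hc : 3 ≤ c) (hn : 4 ≤ n) (hcn : c ≤ n) (a b : ℕ)
    (ha : a ≤ n - c) (hb : b ≤ n - c)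
    (hq : quadFormB n c (extremeVec n c a) ≤ quadFormB n c (extremeVec n c b)) :
    a * ((n-c) - a) ≤ b * ((n-c) - b) := by
  rw [formula n c a hc hcn ha, formula n c b hc hcn hb] at hq
  have hc' : (3:ℚ) ≤ (c:ℚ) := by exact_mod_cast hc
  have hn' : (4:ℚ) ≤ (n:ℚ) := by exact_mod_cast hn
  have hK : (0:ℚ) < ((n:ℚ)-1)*((c:ℚ)-1)^2 + (c:ℚ)*((c:ℚ)-1) := by nlinarith
  have hcast : (a:ℚ) * ((n:ℚ) - (a:ℚ) - (c:ℚ)) ≤ (b:ℚ) * ((n:ℚ) - (b:ℚ) - (c:ℚ)) := by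
    by_contra hcon
    push_neg at hcon
    have := mul_lt_mul_of_pos_right hcon hK
    linarith
  have hfin : ((a * ((n-c) - a) : ℕ) : ℚ) ≤ ((b * ((n-c) - b) : ℕ) : ℚ) := by
    push_cast [Nat.cast_sub ha, Nat.cast_sub hb, Nat.cast_sub hcn]
    nlinarith [hcast]
  exact_mod_cast hfin

lemma descent (n c : ℕ) (hc : 3 ≤ c) (hn : 4 ≤ n) (hcn : c ≤ n) :
    ∀ K : ℕ, ∀ m : Fin c → ℕ, (∀ j, 1 ≤ m j) → (∑ j, m j = n) →
      n ≤ m ⟨0, by omega⟩ + m ⟨c-1, by omega⟩ + K →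
      quadFormB n c m ≤ quadFormB n c (extremeVec n c ((n-c)/2)) := by
  intro K
  induction K with
  | zero =>
    intro m hall hsum hK
    exfalso
    set i0 : Fin c := ⟨0, by omega⟩
    set iL : Fin c := ⟨c-1, by omega⟩
    set b1 : Fin c := ⟨1, by omega⟩
    have hmem : ∑ b ∈ ({i0, iL, b1} : Finset (Fin c)), m b ≤ ∑ b, m b :=
      Finset.sum_le_sum_of_subset (Finset.subset_univ _)
    have hd1 : i0 ∉ ({iL, b1} : Finset (Fin c)) := by
      simp only [Finset.mem_insert, Finset.mem_singleton, not_or, Fin.ext_iff, i0, iL, b1, Fin.val_mk]; omega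
    have hd2 : iL ∉ ({b1} : Finset (Fin c)) := by
      simp only [Finset.mem_singleton, Fin.ext_iff, iL, b1, Fin.val_mk]; omega
    rw [Finset.sum_insert hd1, Finset.sum_insert hd2, Finset.sum_singleton, hsum] at hmem
    have := hall b1
    omega
  | succ K ih =>
    intro m hall hsum hK
    by_cases hex : ∃ j : Fin c, 0 < (j:ℕ) ∧ (j:ℕ) < c - 1 ∧ 2 ≤ m j
    · obtain ⟨j, hj0, hjL, hmj⟩ := hex
      obtain ⟨m', hall', hsum', hlt, hcount⟩ := exchange n c (by omega) m hall hsum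
        ⟨0, by omega⟩ ⟨c-1, by omega⟩ rfl rfl j hj0 hjL hmj
      exact le_of_lt (lt_of_lt_of_le hlt (ih m' hall' hsum' (by omega)))
    · push_neg at hex
      have hint : ∀ j : Fin c, 0 < (j:ℕ) → (j:ℕ) < c - 1 → m j = 1 := by
        intro j h1 h2
        have := hex j h1 h2
        have := hall j
        omega
      obtain ⟨ℓ, hℓ, hm⟩ := all_one_extreme n c hc hcn m hall hsum hint
      rw [hm]
      exact extreme_compare n c hc hn hcn ℓ ((n-c)/2) hℓ
        (Nat.div_le_self _ _) (nat_quad (n-c) ℓ hℓ)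

end QFB

namespace QFB

lemma extreme_feas (n c ℓ : ℕ) (hc : 3 ≤ c) (hcn : c ≤ n) (hℓ : ℓ ≤ n - c) :
    (∀ j, 1 ≤ extremeVec n c ℓ j) ∧ ∑ j, extremeVec n c ℓ j = n := by
  constructor
  · intro j; unfold extremeVec; split_ifs <;> omega
  · unfold extremeVec
    have h1 : ∀ j : Fin c, j ∈ Finset.univ →
        (if (j:ℕ) = 0 then ℓ else 0) = (if j = (⟨0, by omega⟩ : Fin c) then ℓ else 0) := by
      intro j _
      exact if_congr ⟨fun h => Fin.ext h, fun h => by rw [h]⟩ rfl rfl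
    have h2 : ∀ j : Fin c, j ∈ Finset.univ →
        (if (j:ℕ) = c - 1 then n - ℓ - c else 0)
          = (if j = (⟨c-1, by omega⟩ : Fin c) then n - ℓ - c else 0) := by
      intro j _
      exact if_congr ⟨fun h => Fin.ext h, fun h => by rw [h]⟩ rfl rfl
    rw [Finset.sum_add_distrib, Finset.sum_add_distrib, Finset.sum_const,
      Finset.sum_congr rfl h1, Finset.sum_congr rfl h2,
      Finset.sum_ite_eq' Finset.univ (⟨0, by omega⟩ : Fin c) (fun _ => ℓ),
      Finset.sum_ite_eq' Finset.univ (⟨c-1, by omega⟩ : Fin c) (fun _ => n - ℓ - c)]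
    simp [Finset.card_univ]
    omega

end QFB


theorem quadFormB_max (n c : ℕ) (hc : 3 ≤ c) (hn : 4 ≤ n) (hcn : c ≤ n) :
    (∀ ℓ : ℕ, ℓ ≤ n - c →
      quadFormB n c (extremeVec n c ℓ)
        = ((n : ℚ) + 1) * (c : ℚ) ^ 2 * ((c : ℚ) ^ 2 - 1) / 6
          + 2 * ((n : ℚ) - (c : ℚ)) * (-(n : ℚ) * (c : ℚ) ^ 2
              + ((c : ℚ) * ((c : ℚ) + 1) / 6) * ((2 * (n : ℚ) + 1) * (c : ℚ) + (n : ℚ) - 1))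
          + 2 * (ℓ : ℚ) * ((n : ℚ) - (ℓ : ℚ) - (c : ℚ))
              * (((n : ℚ) - 1) * ((c : ℚ) - 1) ^ 2 + (c : ℚ) * ((c : ℚ) - 1))) ∧
    (∀ m : Fin c → ℕ, (∀ j, 1 ≤ m j) → (∑ j, m j = n) →
      quadFormB n c m ≤ quadFormB n c (extremeVec n c ((n - c) / 2))) ∧
    (∀ m : Fin c → ℕ, (∀ j, 1 ≤ m j) → (∑ j, m j = n) →
      (∀ m' : Fin c → ℕ, (∀ j, 1 ≤ m' j) → (∑ j, m' j = n) →
        quadFormB n c m' ≤ quadFormB n c m) →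
      (m = extremeVec n c ((n - c) / 2) ∨ m = extremeVec n c ((n - c + 1) / 2))) := by
  refine ⟨fun ℓ hℓ => QFB.formula n c ℓ hc hcn hℓ, ?_, ?_⟩
  · intro m hall hsum
    exact QFB.descent n c hc hn hcn n m hall hsum (by omega)
  · intro m hall hsum hmaxm
    have hint : ∀ j : Fin c, 0 < (j:ℕ) → (j:ℕ) < c - 1 → m j = 1 := by
      intro j h1 h2
      by_contra hne
      have hmj : 2 ≤ m j := by have := hall j; omega
      obtain ⟨m', hall', hsum', hlt, _⟩ := QFB.exchange n c (by omega) m hall hsum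
        ⟨0, by omega⟩ ⟨c-1, by omega⟩ rfl rfl j h1 h2 hmj
      exact absurd (hmaxm m' hall' hsum') (not_le.mpr hlt)
    obtain ⟨ℓ, hℓ, hm⟩ := QFB.all_one_extreme n c hc hcn m hall hsum hint
    have hEfeas := QFB.extreme_feas n c ((n-c)/2) hc hcn (Nat.div_le_self _ _)
    have h1 := hmaxm (extremeVec n c ((n-c)/2)) hEfeas.1 hEfeas.2
    rw [hm] at h1
    have hcmp := QFB.extreme_compare_rev n c hc hn hcn ((n-c)/2) ℓ
      (Nat.div_le_self _ _) hℓ h1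
    rcases QFB.nat_quad_eq (n-c) ℓ hℓ hcmp with h | h
    · left; rw [hm, h]
    · right; rw [hm, h]
end
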